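/- arXiv:1807.08827 — 4 statements merged into one kernel-verified Lean document; each statement's English description precedes it below -/
import Mathlib

section
/- Let X be a compact, semi-locally simply connected length space of diameter d, and let p ∈ X. For every ε > 0, the fundamental group π₁(X, p) is generated by homotopy classes that contain loops of length less than 2(d + ε). -/
open Set

/-- A length space. -/
def IsLengthSpace (X : Type*) [PseudoEMetricSpace X] : Prop :=
  ∀ x y : X, edist x y =
    ⨅ (γ : ℝ → X) (_ : ContinuousOn γ (Icc 0 1) ∧ γ 0 = x ∧ γ 1 = y),
      eVariationOn γ (Icc 0 1)

/-- Semi-locally simply connected: every point has a neighbourhood in which every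
loop is null-homotopic in `X`. -/
def IsSemiLocallySimplyConnected (X : Type*) [TopologicalSpace X] : Prop :=
  ∀ x : X, ∃ U ∈ nhds x, ∀ γ : Path x x, range γ ⊆ U → Path.Homotopic γ (Path.refl x)

/-- The length of a path, as the variation of its extension to `ℝ`. -/
noncomputable def pathLength {X : Type*} [PseudoEMetricSpace X] {x y : X}
    (γ : Path x y) : ENNReal :=
  eVariationOn γ.extend (Icc 0 1)

/- ### Auxiliary material -/

open CategoryTheory unitInterval

attribute [local instance] Path.Homotopic.setoid

section Aux

variable {Y : Type*} [TopologicalSpace Y]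

/-- Linear-reparametrization homotopy criterion. -/
lemma homotopic_of_linear {x y : Y} (p q : Path x y) (e : ℝ → Y) (he : Continuous e)
    (f g : I → ℝ) (hf : Continuous f) (hg : Continuous g)
    (hp : ∀ t, p t = e (f t)) (hq : ∀ t, q t = e (g t))
    (h0 : f 0 = g 0) (h1 : f 1 = g 1) : Path.Homotopic p q := by
  refine ⟨⟨⟨⟨fun z => e ((1 - (z.1 : ℝ)) * f z.2 + (z.1 : ℝ) * g z.2), ?_⟩, ?_, ?_⟩, ?_⟩⟩
  · exact he.comp <| by continuity
  · intro z
    show e _ = _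
    have : (1 - ((0:I) : ℝ)) * f z + ((0:I) : ℝ) * g z = f z := by norm_num
    rw [this, ← hp z]
    rfl
  · intro z
    show e _ = _
    have : (1 - ((1:I) : ℝ)) * f z + ((1:I) : ℝ) * g z = g z := by norm_num
    rw [this, ← hq z]
    rfl
  · intro t z hz
    rcases hz with hz | hz
    · subst hz
      show e _ = _
      have : (1 - (t : ℝ)) * f 0 + (t : ℝ) * g 0 = f 0 := by rw [h0]; ring
      simp [this, hp 0]
    · simp only [mem_singleton_iff] at hz
      subst hz
      show e _ = _
      have : (1 - (t : ℝ)) * f 1 + (t : ℝ) * g 1 = f 1 := by rw [h1]; ring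
      simp [this, hp 1]

/-- The class of a path as a morphism in the fundamental groupoid. -/
noncomputable def pc {a b : Y} (q : Path a b) :
    FundamentalGroupoid.mk a ⟶ FundamentalGroupoid.mk b := ⟦q⟧

lemma pc_eq {a b : Y} (q : Path a b) : pc q = ⟦q⟧ := rfl

lemma pc_sound {a b : Y} {q q' : Path a b} (h : Path.Homotopic q q') : pc q = pc q' :=
  Quotient.sound h

lemma comp_class {a b c : Y} (p : Path a b) (q : Path b c) :
    pc p ≫ pc q = pc (p.trans q) := rfl

lemma id_class (a : Y) : 𝟙 (FundamentalGroupoid.mk a) = pc (Path.refl a) := rfl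

lemma inv_class {a b : Y} (q : Path a b) :
    CategoryTheory.inv (pc q) = pc q.symm := by
  rw [← Groupoid.inv_eq_inv]
  rfl

lemma class_eq_eqToHom_comp {a b a' b' : Y} (p : Path a b) (q : Path a' b')
    (ha : a = a') (hb : b' = b) (hpq : ∀ t, p t = q t) :
    pc p = eqToHom (congrArg FundamentalGroupoid.mk ha) ≫ pc q ≫
        eqToHom (congrArg FundamentalGroupoid.mk hb) := by
  subst ha; subst hb
  have hq : p = q := by ext t; exact hpq t
  subst hq
  simp

lemma eqToHom_comp_class {a a' b : Y} (h : a' = a) (q : Path a b) :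
    eqToHom (congrArg FundamentalGroupoid.mk h) ≫ pc q = pc (q.cast h rfl) := by
  subst h
  have : q.cast rfl rfl = q := by ext t; rfl
  simp [this]

lemma class_comp_eqToHom {a b b' : Y} (q : Path a b) (h : b = b') :
    pc q ≫ eqToHom (congrArg FundamentalGroupoid.mk h) = pc (q.cast rfl h.symm) := by
  subst h
  have : q.cast rfl rfl = q := by ext t; rfl
  simp [this]

/-- Restriction of a path to a (real) subinterval, affinely reparametrized. -/
noncomputable def restrPath {x y : Y} (γ : Path x y) (s t : ℝ) :
    Path (γ.extend s) (γ.extend t) where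
  toFun u := γ.extend ((1 - (u : ℝ)) * s + (u : ℝ) * t)
  continuous_toFun := γ.continuous_extend.comp <| by continuity
  source' := by norm_num
  target' := by norm_num

lemma restrPath_apply {x y : Y} (γ : Path x y) (s t : ℝ) (u : I) :
    restrPath γ s t u = γ.extend ((1 - (u : ℝ)) * s + (u : ℝ) * t) := rfl

lemma restr_trans {x y : Y} (γ : Path x y) (s t u : ℝ) :
    pc ((restrPath γ s t).trans (restrPath γ t u)) = pc (restrPath γ s u) := by
  refine pc_sound (homotopic_of_linear _ _ γ.extend γ.continuous_extend
    (fun z => if (z : ℝ) ≤ 1/2 then (1 - 2*(z:ℝ)) * s + (2*(z:ℝ)) * t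
      else (2 - 2*(z:ℝ)) * t + (2*(z:ℝ) - 1) * u)
    (fun z => (1 - (z:ℝ)) * s + (z:ℝ) * u) ?_ (by continuity) ?_ ?_ ?_ ?_)
  · refine continuous_if_le (by continuity) (by continuity)
      (Continuous.continuousOn (by continuity)) (Continuous.continuousOn (by continuity)) ?_
    intro z hz
    rw [hz]
    norm_num
  · intro z
    show (restrPath γ s t).trans (restrPath γ t u) z =
      γ.extend (if (z : ℝ) ≤ 1/2 then (1 - 2*(z:ℝ)) * s + (2*(z:ℝ)) * t
        else (2 - 2*(z:ℝ)) * t + (2*(z:ℝ) - 1) * u)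
    rw [Path.trans_apply]
    split_ifs with h
    · rfl
    · show γ.extend ((1 - (2*(z:ℝ) - 1)) * t + (2*(z:ℝ) - 1) * u) =
        γ.extend ((2 - 2*(z:ℝ)) * t + (2*(z:ℝ) - 1) * u)
      congr 1
      ring
  · intro z
    rfl
  · norm_num
  · norm_num

end Aux

section LengthAux

variable {Y : Type*} [PseudoEMetricSpace Y]

lemma pathLength_cast {x y x' y' : Y} (γ : Path x y) (hx : x' = x) (hy : y' = y) :
    pathLength (γ.cast hx hy) = pathLength γ := by
  unfold pathLength Path.extend
  rfl

lemma pathLength_symm {x y : Y} (γ : Path x y) : pathLength γ.symm = pathLength γ := by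
  unfold pathLength
  have h1 : EqOn γ.symm.extend (γ.extend ∘ fun t : ℝ => 1 - t) (Icc 0 1) := by
    intro t ht
    have h1t : 1 - t ∈ Icc (0:ℝ) 1 := by constructor <;> [linarith [ht.2]; linarith [ht.1]]
    rw [Path.extend_apply _ ht, Function.comp_apply, Path.extend_apply _ h1t]
    show γ (σ ⟨t, ht⟩) = γ ⟨1 - t, h1t⟩
    have hσ : σ ⟨t, ht⟩ = ⟨1 - t, h1t⟩ := by
      ext
      exact unitInterval.coe_symm_eq _
    rw [hσ]
  rw [eVariationOn.eq_of_eqOn h1,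
    eVariationOn.comp_eq_of_antitoneOn _ _ (by intro A hA B hB hAB; dsimp only; linarith)]
  congr 1
  ext z
  constructor
  · rintro ⟨w, ⟨hw1, hw2⟩, rfl⟩
    constructor <;> simp <;> linarith
  · rintro ⟨hz1, hz2⟩
    exact ⟨1 - z, ⟨by linarith, by linarith⟩, by ring⟩

lemma pathLength_trans_le {x y z : Y} (γ₁ : Path x y) (γ₂ : Path y z) :
    pathLength (γ₁.trans γ₂) ≤ pathLength γ₁ + pathLength γ₂ := by
  unfold pathLength
  have key := eVariationOn.Icc_add_Icc ((γ₁.trans γ₂).extend) (s := Icc (0:ℝ) 1)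
    (by norm_num : (0:ℝ) ≤ 1/2) (by norm_num : (1/2:ℝ) ≤ 1) (by norm_num)
  rw [Set.inter_eq_self_of_subset_right (Icc_subset_Icc (le_refl _) (by norm_num)),
    Set.inter_eq_self_of_subset_right (Icc_subset_Icc (by norm_num) (le_refl _)),
    Set.inter_self] at key
  rw [← key]
  have e1 : EqOn ((γ₁.trans γ₂).extend) (γ₁.extend ∘ fun t : ℝ => 2 * t) (Icc 0 (1/2)) := by
    intro t ht
    have ht' : t ∈ Icc (0:ℝ) 1 := ⟨ht.1, by linarith [ht.2]⟩
    have h2t : 2 * t ∈ Icc (0:ℝ) 1 := ⟨by linarith [ht.1], by linarith [ht.2]⟩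
    rw [Path.extend_apply _ ht', Path.trans_apply, Function.comp_apply,
      Path.extend_apply _ h2t]
    rw [dif_pos (show ((⟨t, ht'⟩ : I) : ℝ) ≤ 1/2 from ht.2)]
  have e2 : EqOn ((γ₁.trans γ₂).extend) (γ₂.extend ∘ fun t : ℝ => 2 * t - 1) (Icc (1/2) 1) := by
    intro t ht
    have ht' : t ∈ Icc (0:ℝ) 1 := ⟨by linarith [ht.1], ht.2⟩
    have h2t : 2 * t - 1 ∈ Icc (0:ℝ) 1 := ⟨by linarith [ht.1], by linarith [ht.2]⟩
    rw [Path.extend_apply _ ht', Path.trans_apply, Function.comp_apply,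
      Path.extend_apply _ h2t]
    rcases eq_or_lt_of_le ht.1 with h | h
    · rw [dif_pos (le_of_eq h.symm)]
      have hco : (2 * t : ℝ) = 1 := by rw [← h]; ring
      have hco' : (2 * t - 1 : ℝ) = 0 := by rw [← h]; ring
      have l1 : γ₁ ⟨2 * t, by rw [hco]; norm_num⟩ = y := by
        have : (⟨2 * t, by rw [hco]; norm_num⟩ : I) = 1 := by ext; exact hco
        rw [this, γ₁.target]
      have l2 : γ₂ ⟨2 * t - 1, h2t⟩ = y := by
        have : (⟨2 * t - 1, h2t⟩ : I) = 0 := by ext; exact hco'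
        rw [this, γ₂.source]
      rw [l1, l2]
    · rw [dif_neg (show ¬ ((⟨t, ht'⟩ : I) : ℝ) ≤ 1/2 by dsimp only; linarith)]
  rw [eVariationOn.eq_of_eqOn e1, eVariationOn.eq_of_eqOn e2]
  gcongr
  · refine eVariationOn.comp_le_of_monotoneOn _ _ ?_ ?_
    · intro A hA B hB hAB; dsimp only; linarith
    · intro w hw; dsimp only; exact ⟨by linarith [hw.1], by linarith [hw.2]⟩
  · refine eVariationOn.comp_le_of_monotoneOn _ _ ?_ ?_
    · intro A hA B hB hAB; dsimp only; linarith
    · intro w hw; dsimp only; exact ⟨by linarith [hw.1], by linarith [hw.2]⟩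

lemma pathLength_restr_self {x y : Y} (γ : Path x y) (s : ℝ) :
    pathLength (restrPath γ s s) = 0 := by
  unfold pathLength
  apply eVariationOn.constant_on
  rintro A ⟨ta, hta, rfl⟩ B ⟨tb, htb, rfl⟩
  have h : ∀ t ∈ Icc (0:ℝ) 1, (restrPath γ s s).extend t = γ.extend s := by
    intro t ht
    rw [Path.extend_apply _ ht, restrPath_apply]
    congr 1
    ring
  rw [h ta hta, h tb htb]

end LengthAux

/-- In a length space, a point at `edist < a` can be joined by a path of length `< a`
staying at `edist < a` from the start point. -/
lemma exists_short_path {X : Type*} [MetricSpace X] (hX : IsLengthSpace X)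
    (x y : X) (a : ENNReal) (h : edist x y < a) :
    ∃ γ : Path x y, pathLength γ < a ∧ ∀ t, edist x (γ t) < a := by
  rw [hX x y] at h
  simp only [iInf_lt_iff] at h
  obtain ⟨γf, ⟨hc, h0, h1⟩, hlt⟩ := h
  have hcont : Continuous fun t : I => γf t :=
    hc.comp_continuous continuous_subtype_val fun t => t.2
  refine ⟨⟨⟨fun t => γf t, hcont⟩, h0, h1⟩, ?_, ?_⟩
  · unfold pathLength
    have he : EqOn (Path.extend ⟨⟨fun t => γf t, hcont⟩, h0, h1⟩) γf (Icc 0 1) := by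
      intro t ht
      rw [Path.extend_apply _ ht]
      rfl
    rwa [eVariationOn.eq_of_eqOn he]
  · intro t
    have : edist (γf 0) (γf t) ≤ eVariationOn γf (Icc 0 1) :=
      eVariationOn.edist_le γf (by norm_num) t.2
    calc edist x (γf t) = edist (γf 0) (γf t) := by rw [h0]
    _ ≤ eVariationOn γf (Icc 0 1) := this
    _ < a := hlt

/-- Uniform semi-local simple connectedness from compactness. -/
lemma exists_eta {X : Type*} [MetricSpace X] [CompactSpace X] (hX : IsLengthSpace X)
    (hsl : IsSemiLocallySimplyConnected X) :
    ∃ η > (0:ℝ), ∀ (y : X) (α : Path y y),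
      (∀ t, dist y (α t) < η) → Path.Homotopic α (Path.refl y) := by
  choose U hU hprop using hsl
  have hr : ∀ x : X, ∃ r > (0:ℝ), Metric.ball x (3 * r) ⊆ U x := by
    intro x
    obtain ⟨ρ, hρ, hball⟩ := Metric.mem_nhds_iff.mp (hU x)
    exact ⟨ρ/3, by linarith, by
      refine subset_trans (fun z hz => ?_) hball
      simp only [Metric.mem_ball] at hz ⊢
      linarith⟩
  choose r hrpos hrball using hr
  obtain ⟨η, hηpos, hcov⟩ := lebesgue_number_lemma_of_metric
    (isCompact_univ (X := X)) (fun x => Metric.isOpen_ball)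
    (fun z _ => mem_iUnion.mpr ⟨z, Metric.mem_ball_self (hrpos z)⟩)
  refine ⟨η, hηpos, fun y α hα => ?_⟩
  obtain ⟨x, hx⟩ := hcov y (mem_univ y)
  have hyx : dist x y < r x := by
    rw [dist_comm]
    exact Metric.mem_ball.mp (hx (Metric.mem_ball_self hηpos))
  obtain ⟨c, _, hcpt⟩ := exists_short_path hX x y (ENNReal.ofReal (r x))
    (by rwa [edist_lt_ofReal])
  have hcball : ∀ t, c t ∈ U x := by
    intro t
    apply hrball x
    rw [Metric.mem_ball, dist_comm]
    have h1 : dist x (c t) < r x := (edist_lt_ofReal).mp (hcpt t)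
    linarith [hrpos x]
  have hαball : ∀ t, α t ∈ U x := by
    intro t
    apply hrball x
    have h1 : α t ∈ Metric.ball y η := by simpa [Metric.mem_ball, dist_comm] using hα t
    have h2 := hx h1
    simp only [Metric.mem_ball] at h2 ⊢
    linarith [hrpos x]
  set β : Path x x := c.trans (α.trans c.symm) with hβ
  have hβU : range β ⊆ U x := by
    rw [hβ, Path.trans_range, Path.trans_range, Path.symm_range]
    rintro z (⟨t, rfl⟩ | (⟨t, rfl⟩ | ⟨t, rfl⟩))
    · exact hcball t
    · exact hαball t
    · exact hcball t
  have hnull := hprop x β hβU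
  -- now deduce that α is null-homotopic
  have hq : pc c ≫ (pc α ≫ pc c.symm) = 𝟙 (FundamentalGroupoid.mk x) := by
    rw [comp_class, comp_class, id_class]
    exact pc_sound hnull
  have h2 : pc α ≫ pc c.symm = CategoryTheory.inv (pc c) :=
    IsIso.eq_inv_of_hom_inv_id hq
  rw [inv_class] at h2
  have h3 : pc α ≫ pc c.symm = 𝟙 _ ≫ pc c.symm := by
    rw [Category.id_comp]; exact h2
  have h4 : pc α = 𝟙 (FundamentalGroupoid.mk y) := (cancel_mono (pc c.symm)).mp h3
  rw [id_class] at h4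
  exact Quotient.exact h4

section MainAux

variable {Z : Type*} [TopologicalSpace Z]

/-- Build an element of the fundamental group from a loop class. -/
noncomputable def loopOfHom (p : Z)
    (f : FundamentalGroupoid.mk p ⟶ FundamentalGroupoid.mk p) : FundamentalGroup Z p :=
  f

lemma loopOfHom_hom (p : Z) (f : FundamentalGroupoid.mk p ⟶ FundamentalGroupoid.mk p) :
    FundamentalGroup.toArrow (loopOfHom p f) = f := rfl

lemma fg_mul_hom {p : Z} (a b : FundamentalGroup Z p) :
    FundamentalGroup.toArrow (a * b) =
      FundamentalGroup.toArrow b ≫ FundamentalGroup.toArrow a := rfl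

end MainAux

/-- The fundamental group of a compact, semi-locally simply connected length space of
diameter `d` is generated by homotopy classes containing loops of length
less than `2(d + ε)`, for every `ε > 0`. -/
theorem fundamentalGroup_generated_by_short_loops {X : Type*} [MetricSpace X]
    [CompactSpace X] (hX : IsLengthSpace X) (hsl : IsSemiLocallySimplyConnected X)
    (p : X) (ε : ℝ) (hε : 0 < ε) :
    Subgroup.closure {g : FundamentalGroup X p | ∃ γ : Path p p,
        FundamentalGroup.toPath g = ⟦γ⟧ ∧
        pathLength γ < ENNReal.ofReal (2 * (Metric.diam (univ : Set X) + ε))} = ⊤ := by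
  classical
  set d := Metric.diam (univ : Set X) with hd_def
  have hd : 0 ≤ d := Metric.diam_nonneg
  set S := {g : FundamentalGroup X p | ∃ γ : Path p p, FundamentalGroup.toPath g = ⟦γ⟧ ∧
      pathLength γ < ENNReal.ofReal (2 * (d + ε))} with hS_def
  rw [Subgroup.eq_top_iff']
  intro g
  obtain ⟨η, hη, hnull⟩ := exists_eta hX hsl
  obtain ⟨γ, hγrep⟩ := Quotient.exists_rep (FundamentalGroup.toPath g)
  set ρ := min (η/2) (ε/2) with hρ_def
  have hρ : 0 < ρ := lt_min (by linarith) (by linarith)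
  have hρη : ρ < η := lt_of_le_of_lt (min_le_left _ _) (by linarith)
  have hρε : ρ ≤ ε/2 := min_le_right _ _
  have hcont := (isCompact_Icc (a := (0:ℝ)) (b := 1)).uniformContinuousOn_of_continuous
    γ.continuous_extend.continuousOn
  rw [Metric.uniformContinuousOn_iff] at hcont
  obtain ⟨δ, hδ, hmod⟩ := hcont ρ hρ
  obtain ⟨n₀, hn₀⟩ := exists_nat_one_div_lt hδ
  set n : ℕ := n₀ + 1 with hn_def
  have hnR : (0:ℝ) < n := by positivity
  have hnn : (1:ℝ)/n < δ := by
    rw [hn_def]; push_cast; exact hn₀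
  have hmem : ∀ k : ℕ, k ≤ n → (k:ℝ)/n ∈ Icc (0:ℝ) 1 := by
    intro k hk
    constructor
    · positivity
    · rw [div_le_one hnR]; exact_mod_cast hk
  -- short paths from `p` to the subdivision points
  have hσex : ∀ k : ℕ, ∃ s : Path p (γ.extend ((k:ℝ)/n)),
      pathLength s < ENNReal.ofReal (d + ε/2) := by
    intro k
    obtain ⟨s, hs, -⟩ := exists_short_path hX p (γ.extend ((k:ℝ)/n))
      (ENNReal.ofReal (d + ε/2))
      (by rw [edist_lt_ofReal]
          exact lt_of_le_of_lt (Metric.dist_le_diam_of_mem isCompact_univ.isBounded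
            (mem_univ _) (mem_univ _)) (by linarith))
    exact ⟨s, hs⟩
  choose sp hσlen using hσex
  have hp0 : p = γ.extend 0 := γ.extend_zero.symm
  have hlt_final : ∀ q : ℝ, q ≤ d + ε/2 + 1 →
      ENNReal.ofReal (d + ε/2) ≤ ENNReal.ofReal (2*(d+ε)) :=
    fun _ _ => ENNReal.ofReal_le_ofReal (by linarith)
  -- the key induction
  have key : ∀ k : ℕ, k ≤ n → ∃ u : FundamentalGroup X p,
      FundamentalGroup.toArrow u = eqToHom (congrArg FundamentalGroupoid.mk hp0) ≫
        pc (restrPath γ 0 ((k:ℝ)/n)) ≫ CategoryTheory.inv (pc (sp k)) ∧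
      u ∈ Subgroup.closure S := by
    intro k
    induction k with
    | zero =>
      intro _
      refine ⟨loopOfHom p _, rfl, Subgroup.subset_closure ?_⟩
      rw [hS_def]
      refine ⟨((restrPath γ 0 (((0:ℕ):ℝ)/n)).trans (sp 0).symm).cast hp0 rfl, ?_, ?_⟩
      · change FundamentalGroup.toArrow _ = pc _
        rw [loopOfHom_hom, inv_class, comp_class, eqToHom_comp_class]
      · have hR : pathLength (restrPath γ 0 (((0:ℕ):ℝ)/n)) = 0 := by
          rw [show (((0:ℕ):ℝ)/n : ℝ) = 0 by norm_num]
          exact pathLength_restr_self γ 0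
        calc pathLength (((restrPath γ 0 (((0:ℕ):ℝ)/n)).trans (sp 0).symm).cast hp0 rfl)
            = pathLength ((restrPath γ 0 (((0:ℕ):ℝ)/n)).trans (sp 0).symm) :=
              pathLength_cast _ _ _
          _ ≤ pathLength (restrPath γ 0 (((0:ℕ):ℝ)/n)) + pathLength (sp 0).symm :=
              pathLength_trans_le _ _
          _ = pathLength (sp 0) := by rw [hR, pathLength_symm, zero_add]
          _ < ENNReal.ofReal (d + ε/2) := hσlen 0
          _ ≤ ENNReal.ofReal (2*(d+ε)) := ENNReal.ofReal_le_ofReal (by linarith)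
    | succ k ih =>
      intro hk
      obtain ⟨u, hu, huH⟩ := ih (Nat.le_of_succ_le hk)
      have hkn : k ≤ n := Nat.le_of_succ_le hk
      have hstep : ((k+1:ℕ):ℝ)/n - (k:ℝ)/n = 1/n := by push_cast; ring
      -- nearness of points on the k-th piece
      have hq_near : ∀ c : ℝ, 0 ≤ c → c ≤ 1 →
          dist (γ.extend ((k:ℝ)/n))
            (γ.extend ((1-c) * ((k:ℝ)/n) + c * (((k+1:ℕ):ℝ)/n))) < ρ := by
        intro c h0 h1
        have hv : (1-c) * ((k:ℝ)/n) + c * (((k+1:ℕ):ℝ)/n) - (k:ℝ)/n = c * (1/n) := by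
          have := hstep
          nlinarith [hstep]
        have hcn : c * (1/(n:ℝ)) ≤ 1/n := by
          have h2 := mul_le_mul_of_nonneg_right h1
            (le_of_lt (show (0:ℝ) < 1/n by positivity))
          simpa using h2
        have hcn0 : 0 ≤ c * (1/(n:ℝ)) := by positivity
        refine hmod _ (hmem k hkn) _ ⟨?_, ?_⟩ ?_
        · have := (hmem k hkn).1
          linarith
        · have := (hmem (k+1) hk).2
          linarith [hstep]
        · rw [Real.dist_eq, show ((k:ℝ)/n - ((1-c) * ((k:ℝ)/n) + c * (((k+1:ℕ):ℝ)/n)))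
              = -(c * (1/n)) by linarith [hv], abs_neg, abs_of_nonneg hcn0]
          exact lt_of_le_of_lt hcn hnn
      -- a short path from x_k to x_{k+1}
      obtain ⟨τ, hτlen, hτpt⟩ := exists_short_path hX (γ.extend ((k:ℝ)/n))
        (γ.extend (((k+1:ℕ):ℝ)/n)) (ENNReal.ofReal ρ)
        (by rw [edist_lt_ofReal]
            have := hq_near 1 zero_le_one le_rfl
            simpa using this)
      -- the piece of γ is homotopic to τ
      have hqτ : pc (restrPath γ ((k:ℝ)/n) (((k+1:ℕ):ℝ)/n)) = pc τ := by
        have hlpt : ∀ t, dist (γ.extend ((k:ℝ)/n))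
            (((restrPath γ ((k:ℝ)/n) (((k+1:ℕ):ℝ)/n)).trans τ.symm) t) < η := by
          intro t
          rw [Path.trans_apply]
          split_ifs with hcond
          · exact lt_trans (hq_near (2*(t:ℝ)) (by linarith [t.2.1]) (by linarith)) hρη
          · exact lt_trans (edist_lt_ofReal.mp (hτpt _)) hρη
        have hl := hnull _ _ hlpt
        have h1 : pc (restrPath γ ((k:ℝ)/n) (((k+1:ℕ):ℝ)/n)) ≫ pc τ.symm = 𝟙 _ := by
          rw [comp_class, id_class]
          exact pc_sound hl
        have h2 : pc τ ≫ pc τ.symm = 𝟙 _ := by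
          rw [comp_class, id_class]
          exact pc_sound ⟨(Path.Homotopy.reflTransSymm τ).symm⟩
        exact (cancel_mono (pc τ.symm)).mp (h1.trans h2.symm)
      -- the generator
      set m : FundamentalGroupoid.mk p ⟶ FundamentalGroupoid.mk p :=
        pc (sp k) ≫ pc (restrPath γ ((k:ℝ)/n) (((k+1:ℕ):ℝ)/n)) ≫
          CategoryTheory.inv (pc (sp (k+1))) with hm_def
      have hm : m = pc ((sp k).trans (τ.trans (sp (k+1)).symm)) := by
        rw [hm_def, hqτ, inv_class, comp_class, comp_class]
      have hvS : loopOfHom p m ∈ S := by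
        rw [hS_def]
        refine ⟨(sp k).trans (τ.trans (sp (k+1)).symm), hm, ?_⟩
        calc pathLength ((sp k).trans (τ.trans (sp (k+1)).symm))
            ≤ pathLength (sp k) + pathLength (τ.trans (sp (k+1)).symm) :=
              pathLength_trans_le _ _
          _ ≤ pathLength (sp k) + (pathLength τ + pathLength (sp (k+1)).symm) :=
              add_le_add le_rfl (pathLength_trans_le _ _)
          _ = pathLength (sp k) + (pathLength τ + pathLength (sp (k+1))) := by
              rw [pathLength_symm]
          _ < ENNReal.ofReal (d + ε/2) +
              (ENNReal.ofReal ρ + ENNReal.ofReal (d + ε/2)) :=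
              ENNReal.add_lt_add (hσlen k) (ENNReal.add_lt_add hτlen (hσlen (k+1)))
          _ = ENNReal.ofReal ((d + ε/2) + (ρ + (d + ε/2))) := by
              rw [← ENNReal.ofReal_add (le_of_lt hρ) (by linarith : (0:ℝ) ≤ d + ε/2),
                ← ENNReal.ofReal_add (by linarith : (0:ℝ) ≤ d + ε/2)
                  (by linarith : (0:ℝ) ≤ ρ + (d + ε/2))]
          _ ≤ ENNReal.ofReal (2*(d+ε)) := ENNReal.ofReal_le_ofReal (by linarith)
      refine ⟨loopOfHom p m * u, ?_, Subgroup.mul_mem _ (Subgroup.subset_closure hvS) huH⟩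
      rw [fg_mul_hom, hu, loopOfHom_hom]
      simp only [Category.assoc, IsIso.inv_hom_id_assoc, hm_def]
      rw [← Category.assoc (pc (restrPath γ 0 ((k:ℝ)/n))), comp_class, restr_trans]
  -- conclude
  obtain ⟨u, hu, huH⟩ := key n le_rfl
  have hnn1 : ((n:ℝ))/n = 1 := div_self (ne_of_gt hnR)
  have hxn : γ.extend ((n:ℝ)/n) = p := by rw [hnn1]; exact γ.extend_one
  have hdecomp : FundamentalGroup.toArrow g = eqToHom (congrArg FundamentalGroupoid.mk hp0) ≫
      pc (restrPath γ 0 ((n:ℝ)/n)) ≫ eqToHom (congrArg FundamentalGroupoid.mk hxn) := by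
    rw [show FundamentalGroup.toArrow g = ⟦γ⟧ from hγrep.symm]
    refine class_eq_eqToHom_comp γ (restrPath γ 0 ((n:ℝ)/n)) hp0 hxn ?_
    intro t
    rw [restrPath_apply, show (1 - (t:ℝ))*0 + (t:ℝ)*((n:ℝ)/n) = (t:ℝ) by
      rw [hnn1]; ring]
    exact (γ.extend_extends' t).symm
  set m' : FundamentalGroupoid.mk p ⟶ FundamentalGroupoid.mk p :=
    pc (sp n) ≫ eqToHom (congrArg FundamentalGroupoid.mk hxn) with hm'_def
  have hm' : m' = pc ((sp n).cast rfl hxn.symm) := by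
    rw [hm'_def]
    exact class_comp_eqToHom (sp n) hxn
  have hvS : loopOfHom p m' ∈ S := by
    rw [hS_def]
    refine ⟨(sp n).cast rfl hxn.symm, hm', ?_⟩
    calc pathLength ((sp n).cast rfl hxn.symm) = pathLength (sp n) := pathLength_cast _ _ _
      _ < ENNReal.ofReal (d + ε/2) := hσlen n
      _ ≤ ENNReal.ofReal (2*(d+ε)) := ENNReal.ofReal_le_ofReal (by linarith)
  have hg : g = loopOfHom p m' * u := by
    show FundamentalGroup.toArrow g = FundamentalGroup.toArrow (loopOfHom p m' * u)
    rw [fg_mul_hom, hu, loopOfHom_hom, hdecomp, hm'_def]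
    simp only [Category.assoc, IsIso.inv_hom_id_assoc]
  rw [hg]
  exact Subgroup.mul_mem _ (Subgroup.subset_closure hvS) huH
end

section
/- Let Y be a simply connected 2-dimensional simplicial complex with 1-skeleton Z, let e, h ∈ Z with d(e,h) = m, fix a geodesic e = g₀, …, g_m = h, and for 0 < i < m let T_i be the connected component of g_i in the subgraph of Z induced by the sphere S_i = {g : d(g,e) = i}. Then removing the vertices of T_i disconnects e from h in Z; that is, every path in Z from e to h meets T_i. -/
open SimpleGraph

/-- A 2-dimensional simplicial complex, given combinatorially: a graph together with
a set of triangular faces, all of whose edges belong to the graph. -/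
structure TwoComplex (V : Type*) where
  graph : SimpleGraph V
  faces : Set (Finset V)
  card_eq : ∀ f ∈ faces, f.card = 3
  edges_mem : ∀ f ∈ faces, ∀ a ∈ f, ∀ b ∈ f, a ≠ b → graph.Adj a b

/-- Combinatorial homotopy of walks in a 2-complex: generated by cancelling
backtracks and by exchanging two sides of a triangular face for the third. -/
inductive TwoComplex.Homotopic {V : Type*} [DecidableEq V] (C : TwoComplex V) :
    ∀ {u w : V}, C.graph.Walk u w → C.graph.Walk u w → Prop
  | refl {u w} (p : C.graph.Walk u w) : TwoComplex.Homotopic C p p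
  | symm {u w} {p q : C.graph.Walk u w} :
      TwoComplex.Homotopic C p q → TwoComplex.Homotopic C q p
  | trans {u w} {p q r : C.graph.Walk u w} :
      TwoComplex.Homotopic C p q → TwoComplex.Homotopic C q r →
      TwoComplex.Homotopic C p r
  | backtrack {u v x w} (p : C.graph.Walk u v) (h : C.graph.Adj v x)
      (q : C.graph.Walk v w) :
      TwoComplex.Homotopic C (p.append ((SimpleGraph.Walk.cons h
        (SimpleGraph.Walk.cons h.symm q)))) (p.append q)
  | triangle {u a b c w} (hf : ({a, b, c} : Finset V) ∈ C.faces)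
      (hab : C.graph.Adj a b) (hac : C.graph.Adj a c) (hcb : C.graph.Adj c b)
      (p : C.graph.Walk u a) (q : C.graph.Walk b w) :
      TwoComplex.Homotopic C (p.append (SimpleGraph.Walk.cons hab q))
        (p.append (SimpleGraph.Walk.cons hac (SimpleGraph.Walk.cons hcb q)))

/-- A 2-complex is simply connected if every closed walk is null-homotopic. -/
def TwoComplex.SimplyConnected {V : Type*} [DecidableEq V] (C : TwoComplex V) : Prop :=
  ∀ (v : V) (p : C.graph.Walk v v), TwoComplex.Homotopic C p SimpleGraph.Walk.nil

/-- The Cayley graph of a group with respect to a set of generators. -/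
def cayleyGraph (G : Type*) [Group G] (S : Set G) : SimpleGraph G where
  Adj g h := g ≠ h ∧ (g⁻¹ * h ∈ S ∨ h⁻¹ * g ∈ S)
  symm := ⟨fun g h ⟨hne, hor⟩ => ⟨hne.symm, hor.symm⟩⟩
  loopless := ⟨fun g ⟨hne, _⟩ => hne rfl⟩

open scoped Classical in
noncomputable def wgt {V : Type*} (C : TwoComplex V) (e : V) (i : ℕ) (T : Set V)
    (u v : V) : ℤ :=
  (if u ∈ T ∧ C.graph.dist e v = i + 1 then 1 else 0)
  - (if C.graph.dist e u = i + 1 ∧ v ∈ T then 1 else 0)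

noncomputable def wsum {V : Type*} (C : TwoComplex V) (e : V) (i : ℕ) (T : Set V) :
    ∀ {u v : V}, C.graph.Walk u v → ℤ
  | _, _, SimpleGraph.Walk.nil => 0
  | _, _, @SimpleGraph.Walk.cons _ _ u x _ _ p => wgt C e i T u x + wsum C e i T p

@[simp] lemma wsum_nil {V : Type*} (C : TwoComplex V) (e : V) (i : ℕ) (T : Set V) (u : V) :
    wsum C e i T (SimpleGraph.Walk.nil : C.graph.Walk u u) = 0 := rfl

@[simp] lemma wsum_cons {V : Type*} (C : TwoComplex V) (e : V) (i : ℕ) (T : Set V)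
    {u x v : V} (h : C.graph.Adj u x) (p : C.graph.Walk x v) :
    wsum C e i T (SimpleGraph.Walk.cons h p) = wgt C e i T u x + wsum C e i T p := rfl

@[simp] lemma wsum_append {V : Type*} (C : TwoComplex V) (e : V) (i : ℕ) (T : Set V)
    {u v w : V} (p : C.graph.Walk u v) (q : C.graph.Walk v w) :
    wsum C e i T (p.append q) = wsum C e i T p + wsum C e i T q := by
  induction p with
  | nil => simp
  | cons h p ih => simp [ih]; ring

lemma wgt_anti {V : Type*} (C : TwoComplex V) (e : V) (i : ℕ) (T : Set V) (u v : V) :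
    wgt C e i T u v = - wgt C e i T v u := by
  classical
  unfold wgt
  rw [if_congr (and_comm (a := u ∈ T)) rfl rfl,
      if_congr (and_comm (a := C.graph.dist e u = i + 1)) rfl rfl]
  ring

lemma wsum_reverse {V : Type*} (C : TwoComplex V) (e : V) (i : ℕ) (T : Set V)
    {u v : V} (p : C.graph.Walk u v) :
    wsum C e i T p.reverse = - wsum C e i T p := by
  induction p with
  | nil => simp
  | cons h p ih =>
    simp only [SimpleGraph.Walk.reverse_cons, wsum_append, wsum_cons, wsum_nil, ih]
    rw [wgt_anti C e i T]
    ring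

lemma sphere_step {V : Type*} (C : TwoComplex V) (e : V) (i : ℕ) (T : Set V)
    (hT1 : ∀ t ∈ T, C.graph.dist e t = i)
    (hT2 : ∀ t ∈ T, ∀ x, C.graph.Adj t x → C.graph.dist e x = i → x ∈ T)
    (hi0 : 0 < i)
    {t x y : V} (ht : t ∈ T) (htx : C.graph.Adj t x) (hty : C.graph.Adj t y)
    (hxy : C.graph.Adj x y) (hyT : y ∉ T)
    (hx : C.graph.dist e x = i + 1) : C.graph.dist e y = i + 1 := by
  have hdt : C.graph.dist e t = i := hT1 t ht
  have hre : C.graph.Reachable e t := Reachable.of_dist_ne_zero (by omega)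
  obtain ⟨w, hw⟩ := hre.exists_walk_length_eq_dist
  have hupper : C.graph.dist e y ≤ i + 1 := by
    have h1 := SimpleGraph.dist_le (w.append hty.toWalk)
    simpa [SimpleGraph.Adj.toWalk, hw, hdt] using h1
  have hrey : C.graph.Reachable e y := ⟨w.append hty.toWalk⟩
  obtain ⟨wy, hwy⟩ := hrey.exists_walk_length_eq_dist
  have hlow : i + 1 ≤ C.graph.dist e y + 1 := by
    have h2 := SimpleGraph.dist_le (wy.append hxy.symm.toWalk)
    simp only [SimpleGraph.Walk.length_append, SimpleGraph.Adj.toWalk,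
      SimpleGraph.Walk.length_cons, SimpleGraph.Walk.length_nil, hwy, hx] at h2
    omega
  have hne : C.graph.dist e y ≠ i := fun hdy => hyT (hT2 t ht y hty hdy)
  omega

lemma wgt_triangle {V : Type*} (C : TwoComplex V) (e : V) (i : ℕ) (T : Set V)
    (hT1 : ∀ t ∈ T, C.graph.dist e t = i)
    (hT2 : ∀ t ∈ T, ∀ x, C.graph.Adj t x → C.graph.dist e x = i → x ∈ T)
    (hi0 : 0 < i)
    {a b c : V} (hab : C.graph.Adj a b) (hac : C.graph.Adj a c)
    (hcb : C.graph.Adj c b) :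
    wgt C e i T a b = wgt C e i T a c + wgt C e i T c b := by
  classical
  have hiff : ∀ t ∈ T, ∀ x y, C.graph.Adj t x → C.graph.Adj t y → C.graph.Adj x y →
      x ∉ T → y ∉ T → (C.graph.dist e x = i + 1 ↔ C.graph.dist e y = i + 1) :=
    fun t ht x y htx hty hxy hx hy =>
      ⟨fun hh => sphere_step C e i T hT1 hT2 hi0 ht htx hty hxy hy hh,
       fun hh => sphere_step C e i T hT1 hT2 hi0 ht hty htx hxy.symm hx hh⟩
  have hTd : ∀ t ∈ T, ¬ (C.graph.dist e t = i + 1) := fun t ht => by rw [hT1 t ht]; omega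
  unfold wgt
  by_cases hA : a ∈ T <;> by_cases hB : b ∈ T <;> by_cases hC : c ∈ T
  · simp [hA, hB, hC, hTd a hA, hTd b hB, hTd c hC]
  · simp [hA, hB, hC, hTd a hA, hTd b hB]
  · simp [hA, hB, hC, hTd a hA, hTd c hC]
  · have key := hiff a hA b c hab hac hcb.symm hB hC
    simp [hA, hB, hC, hTd a hA, key]
  · simp [hA, hB, hC, hTd b hB, hTd c hC]
  · have key := hiff b hB a c hab.symm hcb.symm hac hA hC
    simp [hA, hB, hC, hTd b hB, key]
  · have key := hiff c hC a b hac.symm hcb hab hA hB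
    simp [hA, hB, hC, hTd c hC, key]
  · simp [hA, hB, hC]

lemma wsum_homotopic {V : Type*} [DecidableEq V] (C : TwoComplex V) (e : V) (i : ℕ) (T : Set V)
    (hT1 : ∀ t ∈ T, C.graph.dist e t = i)
    (hT2 : ∀ t ∈ T, ∀ x, C.graph.Adj t x → C.graph.dist e x = i → x ∈ T)
    (hi0 : 0 < i)
    {u v : V} {p q : C.graph.Walk u v} (hpq : TwoComplex.Homotopic C p q) :
    wsum C e i T p = wsum C e i T q := by
  induction hpq with
  | refl => rfl
  | symm _ ih => exact ih.symm
  | trans _ _ ih1 ih2 => exact ih1.trans ih2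
  | backtrack p h q =>
    simp only [wsum_append, wsum_cons]
    rw [wgt_anti C e i T]
    ring
  | triangle hf hab hac hcb p q =>
    simp only [wsum_append, wsum_cons]
    rw [wgt_triangle C e i T hT1 hT2 hi0 hab hac hcb]
    ring

lemma getVert_mem_support' {V : Type*} {G : SimpleGraph V} {u v : V}
    (p : G.Walk u v) (k : ℕ) : p.getVert k ∈ p.support := by
  induction p generalizing k with
  | nil => simp [SimpleGraph.Walk.getVert]
  | cons h p ih =>
    cases k with
    | zero => simp [SimpleGraph.Walk.getVert_zero]
    | succ k =>
      rw [SimpleGraph.Walk.getVert_cons_succ]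
      simp [ih k]

lemma wsum_index {V : Type*} (C : TwoComplex V) (e : V) (i : ℕ) (T : Set V)
    {u v : V} (p : C.graph.Walk u v) :
    wsum C e i T p =
      ∑ k ∈ Finset.range p.length, wgt C e i T (p.getVert k) (p.getVert (k + 1)) := by
  induction p with
  | nil => simp
  | cons h p ih =>
    rw [SimpleGraph.Walk.length_cons, Finset.sum_range_succ']
    simp only [SimpleGraph.Walk.getVert_cons_succ, SimpleGraph.Walk.getVert_zero]
    rw [wsum_cons, ih, add_comm]

/-- In a simply connected 2-complex, for `0 < i < m`, the component `T i` of the `i`-th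
vertex of a geodesic from `e` to `h` inside the sphere `S i` separates `e` from `h`:
every walk from `e` to `h` meets `T i`. -/
theorem walk_meets_sphere_component {V : Type*} [DecidableEq V]
    (C : TwoComplex V) (hsc : C.SimplyConnected)
    (e h : V) (m : ℕ) (hm : C.graph.dist e h = m)
    (p : C.graph.Walk e h) (hgeod : p.length = m)
    (hvert : ∀ k ≤ m, C.graph.dist e (p.getVert k) = k)
    (i : ℕ) (hi0 : 0 < i) (him : i < m)
    (S : Set V) (hS : S = {g : V | C.graph.dist e g = i})
    (T : Set V)
    (hT : T = {g : V | ∃ hg : g ∈ S,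
      (C.graph.induce S).Reachable
        ⟨p.getVert i, by rw [hS]; exact hvert i him.le⟩ ⟨g, hg⟩}) :
    ∀ q : C.graph.Walk e h, ∃ x ∈ q.support, x ∈ T := by
  intro q
  by_contra hcon
  push_neg at hcon
  have hT1 : ∀ t ∈ T, C.graph.dist e t = i := by
    intro t ht
    rw [hT] at ht
    obtain ⟨hg, -⟩ := ht
    rw [hS] at hg
    exact hg
  have hT2 : ∀ t ∈ T, ∀ x, C.graph.Adj t x → C.graph.dist e x = i → x ∈ T := by
    intro t ht x htx hdx
    rw [hT] at ht ⊢
    obtain ⟨hgS, hr⟩ := ht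
    have hxS : x ∈ S := by rw [hS]; exact hdx
    exact ⟨hxS, hr.trans (SimpleGraph.Adj.reachable (by simpa using htx :
      (C.graph.induce S).Adj ⟨t, hgS⟩ ⟨x, hxS⟩))⟩
  have giT : p.getVert i ∈ T := by
    rw [hT]
    exact ⟨by rw [hS]; exact hvert i him.le, SimpleGraph.Reachable.refl _⟩
  have hwp : wsum C e i T p = 1 := by
    rw [wsum_index, hgeod,
      Finset.sum_eq_single_of_mem i (Finset.mem_range.2 him)]
    · unfold wgt
      rw [if_pos ⟨giT, hvert (i + 1) him⟩, if_neg (by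
        rintro ⟨h1, -⟩
        rw [hvert i him.le] at h1
        omega)]
      norm_num
    · intro k hk hki
      have hkm : k < m := Finset.mem_range.1 hk
      unfold wgt
      rw [if_neg (by
          rintro ⟨h1, -⟩
          have h2 := hT1 _ h1
          rw [hvert k hkm.le] at h2
          exact hki h2),
        if_neg (by
          rintro ⟨h1, h2⟩
          have h3 := hT1 _ h2
          rw [hvert (k + 1) hkm] at h3
          rw [hvert k hkm.le] at h1
          omega)]
      norm_num
  have hwq : wsum C e i T q = 0 := by
    rw [wsum_index]
    refine Finset.sum_eq_zero fun k hk => ?_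
    unfold wgt
    rw [if_neg (by
        rintro ⟨h1, -⟩
        exact hcon _ (getVert_mem_support' q k) h1),
      if_neg (by
        rintro ⟨-, h2⟩
        exact hcon _ (getVert_mem_support' q (k + 1)) h2)]
    norm_num
  have hhom := hsc e (q.append p.reverse)
  have hzero := wsum_homotopic C e i T hT1 hT2 hi0 hhom
  rw [wsum_append, wsum_reverse, hwp, hwq, wsum_nil] at hzero
  omega
end

section
/- Let X be a compact, semi-locally simply connected length space with universal cover X̃ (with lifted metric), p ∈ X with fiber {p₁,…,p_n}, ε > 0, and U_i = B(p_i, d+ε) where d = diam(X). Then the nerve N of the cover {U_i} is connected; indeed for any i, j there is a sequence p_{i=i₀}, p_{i₁}, …, p_{i_m = j} in the fiber with d(p_{i_{k−1}}, p_{i_k}) < 2(d + ε) for all k, so consecutive vertices span edges of N. -/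
open Set

/-- The covering map preserves lengths of curves. -/
def IsLiftedMetric {X Xt : Type*} [PseudoEMetricSpace X] [PseudoEMetricSpace Xt]
    (ρ : Xt → X) : Prop :=
  ∀ γ : ℝ → Xt, ContinuousOn γ (Icc 0 1) →
    eVariationOn (ρ ∘ γ) (Icc 0 1) = eVariationOn γ (Icc 0 1)

/-- The 1-skeleton of the nerve of a cover `U`: vertices are indices, with an edge
between `i ≠ j` whenever `U i ∩ U j ≠ ∅`. -/
def nerveGraph {ι Y : Type*} (U : ι → Set Y) : SimpleGraph ι where
  Adj i j := i ≠ j ∧ (U i ∩ U j).Nonempty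
  symm := ⟨fun i j ⟨hne, x, hx⟩ => ⟨hne.symm, x, hx.2, hx.1⟩⟩
  loopless := ⟨fun i ⟨hne, _⟩ => hne rfl⟩


lemma paste_continuousOn {Z : Type*} [TopologicalSpace Z] {f g : ℝ → Z} {b : ℝ} {a c : ℝ}
    (hf : ContinuousOn f (Icc a b)) (hg : ContinuousOn g (Icc b c))
    (heq : f b = g b) :
    ContinuousOn (fun u => if u ≤ b then f u else g u) (Icc a c) := by
  set h : ℝ → Z := fun u => if u ≤ b then f u else g u with hh
  have hEf : EqOn h f (Icc a b) := fun u hu => if_pos hu.2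
  have hEg : EqOn h g (Icc b c) := by
    intro u hu
    by_cases hub : u ≤ b
    · have : u = b := le_antisymm hub hu.1
      simp [hh, this, heq]
    · exact if_neg hub
  intro x hx
  have hsub : Icc a c ⊆ Icc a b ∪ Icc b c := by
    intro u hu
    rcases le_total u b with h'|h'
    · exact Or.inl ⟨hu.1, h'⟩
    · exact Or.inr ⟨h', hu.2⟩
  apply (ContinuousWithinAt.union ?_ ?_).mono hsub
  · by_cases hxb : x ≤ b
    · exact ((hf x ⟨hx.1, hxb⟩).congr hEf (hEf ⟨hx.1, hxb⟩))
    · exact continuousWithinAt_of_notMem_closure (by rw [closure_Icc]; exact fun hm => hxb hm.2)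
  · by_cases hxb : b ≤ x
    · exact ((hg x ⟨hxb, hx.2⟩).congr hEg (hEg ⟨hxb, hx.2⟩))
    · exact continuousWithinAt_of_notMem_closure (by rw [closure_Icc]; exact fun hm => hxb hm.1)

/-- Path lifting for covering maps. -/
lemma exists_lift_of_isCoveringMap {X Xt : Type*} [MetricSpace X] [MetricSpace Xt]
    (ρ : Xt → X) (hρ : IsCoveringMap ρ) (γ : ℝ → X) (hγ : ContinuousOn γ (Icc 0 1))
    (e : Xt) (he : ρ e = γ 0) :
    ∃ Γ : ℝ → Xt, ContinuousOn Γ (Icc 0 1) ∧ Γ 0 = e ∧ ∀ u ∈ Icc (0:ℝ) 1, ρ (Γ u) = γ u := by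
  set S : Set ℝ := {t | t ∈ Icc (0:ℝ) 1 ∧ ∃ Γ : ℝ → Xt, ContinuousOn Γ (Icc 0 t) ∧ Γ 0 = e ∧
    ∀ u ∈ Icc (0:ℝ) t, ρ (Γ u) = γ u} with hS
  have h0 : (0:ℝ) ∈ S := by
    refine ⟨⟨le_refl _, zero_le_one⟩, fun _ => e, continuousOn_const, rfl, ?_⟩
    intro u hu
    have : u = 0 := le_antisymm hu.2 hu.1
    rw [this, he]
  have hbdd : BddAbove S := ⟨1, fun t ht => ht.1.2⟩
  have hne : S.Nonempty := ⟨0, h0⟩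
  set T := sSup S with hT
  have hT0 : 0 ≤ T := le_csSup hbdd h0
  have hT1 : T ≤ 1 := csSup_le hne (fun t ht => ht.1.2)
  -- trivialization at γ T
  obtain ⟨tr, htr⟩ : ∃ tr : Bundle.Trivialization (ρ ⁻¹' {γ T}) ρ, γ T ∈ tr.baseSet := by
    have h := hρ (γ T)
    haveI : Nonempty (ρ ⁻¹' {γ T}) := by
      obtain ⟨V, hxV, hVo, _, H, hH⟩ := h.2
      have hmemV : γ ⁻¹' V ∈ nhdsWithin T (Icc 0 1) := hγ T ⟨hT0, hT1⟩ (hVo.mem_nhds hxV)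
      obtain ⟨δ, hδ, hball⟩ := Metric.mem_nhdsWithin_iff.1 hmemV
      obtain ⟨s, hsS, hs⟩ := exists_lt_of_lt_csSup hne (show T - δ < T by linarith)
      have hsT := le_csSup hbdd hsS
      obtain ⟨⟨hs0, hs1⟩, Γ, -, -, hΓl⟩ := hsS
      have hγs : γ s ∈ V := hball ⟨by
        rw [Metric.mem_ball, Real.dist_eq, abs_lt]; constructor <;> linarith, hs0, hs1⟩
      have hΓs : Γ s ∈ ρ ⁻¹' V := by
        show ρ (Γ s) ∈ V; rw [hΓl s ⟨hs0, le_refl _⟩]; exact hγs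
      exact ⟨(H ⟨Γ s, hΓs⟩).2⟩
    exact ⟨h.toTrivialization, h.mem_toTrivialization_baseSet⟩
  -- δ
  have hcw : ContinuousWithinAt γ (Icc 0 1) T := hγ T ⟨hT0, hT1⟩
  have hmem : γ ⁻¹' tr.baseSet ∈ nhdsWithin T (Icc 0 1) :=
    hcw (tr.open_baseSet.mem_nhds htr)
  obtain ⟨δ, hδ, hball⟩ := Metric.mem_nhdsWithin_iff.1 hmem
  -- pick s ∈ S close to T
  obtain ⟨s, hsS, hs⟩ : ∃ s ∈ S, T - δ/2 < s := by
    obtain ⟨s, hsS, hs⟩ := exists_lt_of_lt_csSup hne (show T - δ/2 < T from by linarith)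
    exact ⟨s, hsS, hs⟩
  have hsT : s ≤ T := le_csSup hbdd hsS
  obtain ⟨⟨hs0, hs1⟩, Γ, hΓc, hΓ0, hΓl⟩ := hsS
  set u' := min (T + δ/2) 1 with hu'
  have hsu' : s ≤ u' := le_min (by linarith) hs1
  have hu'1 : u' ≤ 1 := min_le_right _ _
  have hu'0 : 0 ≤ u' := le_trans hs0 hsu'
  have hin : ∀ u ∈ Icc s u', γ u ∈ tr.baseSet := by
    intro u hu
    apply hball
    constructor
    · rw [Metric.mem_ball, Real.dist_eq, abs_lt]
      have h1 : u ≤ T + δ/2 := le_trans hu.2 (min_le_left _ _)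
      have h2 : T - δ/2 < u := lt_of_lt_of_le hs hu.1
      constructor <;> linarith
    · exact ⟨le_trans hs0 hu.1, le_trans hu.2 hu'1⟩
  have hγs : γ s ∈ tr.baseSet := hin s ⟨le_refl _, hsu'⟩
  set q := Γ s with hq
  have hρq : ρ q = γ s := hΓl s ⟨hs0, le_refl _⟩
  have hqsrc : q ∈ tr.source := tr.mem_source.2 (by rw [hρq]; exact hγs)
  set σ : ℝ → Xt := fun u => tr.toOpenPartialHomeomorph.symm (γ u, (tr q).2) with hσ
  have hσlift : ∀ u ∈ Icc s u', ρ (σ u) = γ u := fun u hu => tr.proj_symm_apply' (hin u hu)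
  have hσs : σ s = q := by
    have h1 : ((γ s, (tr q).2) : X × (ρ ⁻¹' {γ T})) = tr q := by
      refine Prod.ext ?_ rfl
      simp only
      rw [← hρq]
      exact (tr.coe_fst hqsrc).symm
    simp only [hσ, h1]
    exact tr.toOpenPartialHomeomorph.left_inv hqsrc
  have hσc : ContinuousOn σ (Icc s u') := by
    apply tr.toOpenPartialHomeomorph.continuousOn_symm.comp
    · exact (hγ.mono (Icc_subset_Icc (le_trans hs0 (le_refl s)) hu'1)).prodMk continuousOn_const
    · intro u hu
      rw [tr.mem_target]
      exact hin u hu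
  set Γ' : ℝ → Xt := fun u => if u ≤ s then Γ u else σ u with hΓ'
  have hΓ'c : ContinuousOn Γ' (Icc 0 u') := paste_continuousOn hΓc hσc (by rw [hσs])
  have hΓ'0 : Γ' 0 = e := by
    simp only [hΓ', if_pos hs0]
    exact hΓ0
  have hΓ'l : ∀ u ∈ Icc (0:ℝ) u', ρ (Γ' u) = γ u := by
    intro u hu
    by_cases hus : u ≤ s
    · simp only [hΓ', if_pos hus]
      exact hΓl u ⟨hu.1, hus⟩
    · simp only [hΓ', if_neg hus]
      exact hσlift u ⟨le_of_not_ge hus, hu.2⟩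
  have hu'S : u' ∈ S := ⟨⟨hu'0, hu'1⟩, Γ', hΓ'c, hΓ'0, hΓ'l⟩
  have hu'T : u' ≤ T := le_csSup hbdd hu'S
  have hT1' : T = 1 := by
    by_contra hTne
    have hTlt : T < 1 := lt_of_le_of_ne hT1 hTne
    have : T < u' := lt_min (by linarith) hTlt
    linarith
  have h1S : (1:ℝ) ∈ S := by
    have : u' = 1 := by rw [hu', hT1']; exact min_eq_right (by linarith)
    rwa [this] at hu'S
  obtain ⟨_, Γ, hc, h0', hl⟩ := h1S
  exact ⟨Γ, hc, h0', hl⟩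

/-- The nerve of the cover of the universal cover `X̃` by the balls `B(pᵢ, d+ε)`
centred at the points of a fiber is connected; moreover any two fiber points are
joined by a chain of fiber points with consecutive distances `< 2(d+ε)`. -/
theorem nerve_connected {X Xt : Type*} [MetricSpace X] [MetricSpace Xt]
    [CompactSpace X] [SimplyConnectedSpace Xt]
    (hX : IsLengthSpace X) (hXt : IsLengthSpace Xt)
    (hsl : IsSemiLocallySimplyConnected X)
    (ρ : Xt → X) (hρ : IsCoveringMap ρ) (hlift : IsLiftedMetric ρ)
    (p : X) (n : ℕ) (hn : 0 < n) (pt : Fin n → Xt)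
    (hpt : Function.Injective pt) (hfib : range pt = ρ ⁻¹' {p})
    (ε : ℝ) (hε : 0 < ε)
    (U : Fin n → Set Xt)
    (hU : ∀ i, U i = Metric.ball (pt i) (Metric.diam (univ : Set X) + ε)) :
    (nerveGraph U).Connected ∧
      ∀ i j : Fin n, ∃ (m : ℕ) (c : ℕ → Fin n), c 0 = i ∧ c m = j ∧
        ∀ k < m, dist (pt (c k)) (pt (c (k + 1))) <
          2 * (Metric.diam (univ : Set X) + ε) := by
  set d := Metric.diam (univ : Set X) with hd
  have hd0 : 0 ≤ d := Metric.diam_nonneg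
  have hr : 0 < d + ε := by linarith
  -- every point of Xt is within d + ε of some fiber point
  have hcov : ∀ x : Xt, ∃ i, dist x (pt i) < d + ε := by
    intro x
    have h1 : dist (ρ x) p ≤ d :=
      Metric.dist_le_diam_of_mem isCompact_univ.isBounded (mem_univ _) (mem_univ _)
    have h2 : edist (ρ x) p < ENNReal.ofReal (d + ε) := by
      rw [edist_dist]
      exact (ENNReal.ofReal_lt_ofReal_iff hr).2 (by linarith)
    rw [hX (ρ x) p] at h2
    rw [iInf_lt_iff] at h2
    obtain ⟨γ, h2⟩ := h2
    rw [iInf_lt_iff] at h2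
    obtain ⟨⟨hγc, hγ0, hγ1⟩, hvar⟩ := h2
    obtain ⟨Γ, hΓc, hΓ0, hΓl⟩ := exists_lift_of_isCoveringMap ρ hρ γ hγc x hγ0.symm
    have hq : Γ 1 ∈ range pt := by
      rw [hfib]
      simp only [mem_preimage, mem_singleton_iff]
      rw [hΓl 1 ⟨zero_le_one, le_refl _⟩, hγ1]
    obtain ⟨i, hi⟩ := hq
    refine ⟨i, ?_⟩
    rw [← edist_lt_ofReal, hi]
    have hle : edist x (Γ 1) ≤ eVariationOn Γ (Icc 0 1) := by
      rw [hXt x (Γ 1)]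
      exact iInf₂_le Γ ⟨hΓc, hΓ0, rfl⟩
    have heqv : eVariationOn Γ (Icc 0 1) = eVariationOn γ (Icc 0 1) := by
      rw [← hlift Γ hΓc]
      exact eVariationOn.eq_of_eqOn (fun u hu => hΓl u hu)
    calc edist x (Γ 1) ≤ eVariationOn Γ (Icc 0 1) := hle
      _ = eVariationOn γ (Icc 0 1) := heqv
      _ < ENNReal.ofReal (d + ε) := hvar
  have hself : ∀ i, pt i ∈ U i := by
    intro i
    rw [hU i, Metric.mem_ball, dist_self]
    exact hr
  have hUopen : ∀ i, IsOpen (U i) := fun i => by rw [hU i]; exact Metric.isOpen_ball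
  -- reachability
  have hreach : ∀ i j : Fin n, (nerveGraph U).Reachable i j := by
    intro i j
    by_contra hj
    set S : Set (Fin n) := {k | (nerveGraph U).Reachable i k} with hSdef
    set A : Set Xt := ⋃ k ∈ S, U k with hA
    set B : Set Xt := ⋃ k ∈ Sᶜ, U k with hB
    have hAopen : IsOpen A := isOpen_biUnion (fun k _ => hUopen k)
    have hBopen : IsOpen B := isOpen_biUnion (fun k _ => hUopen k)
    have hunion : (univ : Set Xt) ⊆ A ∪ B := by
      intro x _
      obtain ⟨k, hk⟩ := hcov x
      have hxk : x ∈ U k := by rw [hU k, Metric.mem_ball]; exact hk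
      by_cases hkS : k ∈ S
      · exact Or.inl (mem_biUnion hkS hxk)
      · exact Or.inr (mem_biUnion hkS hxk)
    have hAne : (univ ∩ A).Nonempty :=
      ⟨pt i, mem_univ _, mem_biUnion (SimpleGraph.Reachable.refl i) (hself i)⟩
    have hBne : (univ ∩ B).Nonempty :=
      ⟨pt j, mem_univ _, mem_biUnion hj (hself j)⟩
    obtain ⟨x, _, hxA, hxB⟩ := isPreconnected_univ A B hAopen hBopen hunion hAne hBne
    obtain ⟨k, hkS, hxk⟩ := mem_iUnion₂.1 hxA
    obtain ⟨l, hlS, hxl⟩ := mem_iUnion₂.1 hxB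
    have hkl : k ≠ l := fun h => hlS (h ▸ hkS)
    have hadj : (nerveGraph U).Adj k l := ⟨hkl, x, hxk, hxl⟩
    exact hlS (hkS.trans hadj.reachable)
  constructor
  · have : Nonempty (Fin n) := ⟨⟨0, hn⟩⟩
    exact SimpleGraph.Connected.mk hreach
  · intro i j
    obtain ⟨w⟩ := hreach i j
    refine ⟨w.length, fun k => w.getVert k, w.getVert_zero, w.getVert_length, ?_⟩
    intro k hk
    obtain ⟨_, x, hx1, hx2⟩ := w.adj_getVert_succ hk
    rw [hU _, Metric.mem_ball] at hx1 hx2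
    calc dist (pt (w.getVert k)) (pt (w.getVert (k+1)))
        ≤ dist (pt (w.getVert k)) x + dist x (pt (w.getVert (k+1))) := dist_triangle _ _ _
      _ < (d + ε) + (d + ε) := by
          rw [dist_comm (pt (w.getVert k)) x]
          exact add_lt_add hx1 hx2
      _ = 2 * (d + ε) := by ring
end

section
/- Let X̃ be a simply connected length space with an open cover {U_i}_{i=1}^n by metric balls U_i = B(p_i, r) such that there exists a partition of unity (ψ_1,…,ψ_n) subordinate to the cover with ψ_i(x) ≠ 0 iff x ∈ U_i. Then the nerve N of the cover is simply connected. -/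
open SimpleGraph

open Set

section NerveAux

variable {ι : Type*} [DecidableEq ι] {Y : Type*}

namespace NerveAux

variable (U : ι → Set Y) (C : TwoComplex ι)
  (hadj : ∀ a b : ι, a ≠ b → (U a ∩ U b).Nonempty → C.graph.Adj a b)

/-- congruence: append on the left -/
lemma hom_append_left {u a b : ι} (r : C.graph.Walk u a) {p q : C.graph.Walk a b}
    (h : C.Homotopic p q) : C.Homotopic (r.append p) (r.append q) := by
  induction h with
  | refl p => exact .refl _
  | symm _ ih => exact .symm ih
  | trans _ _ ih1 ih2 => exact .trans ih1 ih2
  | backtrack p h q =>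
      rw [Walk.append_assoc, Walk.append_assoc]
      exact .backtrack _ _ _
  | triangle hf hab hac hcb p q =>
      rw [Walk.append_assoc, Walk.append_assoc]
      exact .triangle hf hab hac hcb _ _

/-- congruence: append on the right -/
lemma hom_append_right {a b w : ι} {p q : C.graph.Walk a b}
    (h : C.Homotopic p q) (r : C.graph.Walk b w) : C.Homotopic (p.append r) (q.append r) := by
  induction h with
  | refl p => exact .refl _
  | symm _ ih => exact .symm (ih r)
  | trans _ _ ih1 ih2 => exact .trans (ih1 r) (ih2 r)
  | backtrack p h q =>
      rw [← Walk.append_assoc, ← Walk.append_assoc]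
      simp only [Walk.cons_append]
      exact .backtrack _ _ _
  | triangle hf hab hac hcb p q =>
      rw [← Walk.append_assoc, ← Walk.append_assoc]
      simp only [Walk.cons_append]
      exact .triangle hf hab hac hcb _ _

/-- a single step in the nerve graph: nil if the endpoints agree -/
def stepWalk (a b : ι) (h : (U a ∩ U b).Nonempty) : C.graph.Walk a b :=
  if hab : a = b then hab ▸ Walk.nil else Walk.cons (hadj a b hab h) Walk.nil

@[simp] lemma stepWalk_self (a : ι) (h : (U a ∩ U a).Nonempty) :
    stepWalk U C hadj a a h = Walk.nil := by
  simp [stepWalk]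

lemma stepWalk_copy {a b c : ι} (h : (U a ∩ U b).Nonempty) (h1 : a = c) (h2 : b = c)
    (h' : (U c ∩ U c).Nonempty) :
    (stepWalk U C hadj a b h).copy h1 h2 = Walk.nil := by
  subst h1; subst h2; simp

variable (hface : ∀ a b c : ι, a ≠ b → a ≠ c → c ≠ b →
    ∀ y : Y, y ∈ U a → y ∈ U b → y ∈ U c → ({a, b, c} : Finset ι) ∈ C.faces)

include hface in
/-- the fundamental triangle move on single steps -/
lemma triangleMove {a b c : ι} {y : Y} (hya : y ∈ U a) (hyb : y ∈ U b) (hyc : y ∈ U c) :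
    C.Homotopic (stepWalk U C hadj a b (Set.nonempty_of_mem (Set.mem_inter hya hyb)))
      ((stepWalk U C hadj a c (Set.nonempty_of_mem (Set.mem_inter hya hyc))).append (stepWalk U C hadj c b (Set.nonempty_of_mem (Set.mem_inter hyc hyb)))) := by
  by_cases hac : a = c
  · subst hac
    simp only [stepWalk_self]
    exact .refl _
  by_cases hcb : c = b
  · subst hcb
    simp only [stepWalk_self, Walk.append_nil]
    exact .refl _
  by_cases hab : a = b
  · subst hab
    simp only [stepWalk_self, stepWalk, dif_neg hac, dif_neg hcb]
    have := TwoComplex.Homotopic.backtrack (C := C) (Walk.nil (u := a)) (hadj a c hac ⟨y, hya, hyc⟩)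
      (Walk.nil (u := a))
    simp only [Walk.nil_append] at this
    have h2 : (hadj a c hac ⟨y, hya, hyc⟩).symm = hadj c a hcb ⟨y, hyc, hyb⟩ := rfl
    rw [h2] at this
    exact .symm this
  · simp only [stepWalk, dif_neg hac, dif_neg hcb, dif_neg hab]
    have := TwoComplex.Homotopic.triangle (C := C)
      (hface a b c hab hac hcb y hya hyb hyc)
      (hadj a b hab ⟨y, hya, hyb⟩) (hadj a c hac ⟨y, hya, hyc⟩) (hadj c b hcb ⟨y, hyc, hyb⟩)
      (Walk.nil (u := a)) (Walk.nil (u := b))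
    simpa using this

/-- walk along a chain of indices with pairwise intersecting sets -/
def walkFrom (d : ℕ → ι) (hd : ∀ i, (U (d i) ∩ U (d (i+1))).Nonempty) :
    (k : ℕ) → C.graph.Walk (d 0) (d k)
  | 0 => Walk.nil
  | (k+1) => (walkFrom d hd k).append (stepWalk U C hadj (d k) (d (k+1)) (hd k))

lemma walkFrom_add (d : ℕ → ι) (hd : ∀ i, (U (d i) ∩ U (d (i+1))).Nonempty) (j : ℕ) :
    ∀ m, walkFrom U C hadj d hd (j + m) =
      (walkFrom U C hadj d hd j).append
        (walkFrom U C hadj (fun i => d (j + i)) (fun i => hd (j + i)) m)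
  | 0 => by simp [walkFrom, Walk.append_nil]
  | (m+1) => by
      show walkFrom U C hadj d hd ((j + m) + 1) = _
      rw [walkFrom, walkFrom_add d hd j m, ← Walk.append_assoc]
      rfl

lemma walkFrom_congr (f g : ℕ → ι) (hfg : ∀ i, f i = g i)
    (hf : ∀ i, (U (f i) ∩ U (f (i+1))).Nonempty) (hg : ∀ i, (U (g i) ∩ U (g (i+1))).Nonempty)
    (m : ℕ) {x y : ι} (h1 : f 0 = x) (h2 : f m = y) (g1 : g 0 = x) (g2 : g m = y) :
    (walkFrom U C hadj f hf m).copy h1 h2 = (walkFrom U C hadj g hg m).copy g1 g2 := by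
  have : f = g := funext hfg
  subst this
  rfl

lemma hom_copy {a b a' b' : ι} {p q : C.graph.Walk a b} (h : C.Homotopic p q)
    (h1 : a = a') (h2 : b = b') : C.Homotopic (p.copy h1 h2) (q.copy h1 h2) := by
  subst h1; subst h2; simpa using h

include hface in
/-- collapsing a chain all of whose sets contain a common point -/
lemma walkFrom_collapse (d : ℕ → ι) (hd : ∀ i, (U (d i) ∩ U (d (i+1))).Nonempty)
    (y : Y) : ∀ (m : ℕ), (hy : ∀ i, i ≤ m → y ∈ U (d i)) →
    C.Homotopic (walkFrom U C hadj d hd m)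
      (stepWalk U C hadj (d 0) (d m) (Set.nonempty_of_mem (Set.mem_inter (hy 0 (Nat.zero_le _)) (hy m le_rfl))))
  | 0, hy => by
      simp only [stepWalk_self]
      exact .refl _
  | (m+1), hy => by
      have IH := walkFrom_collapse d hd y m (fun i hi => hy i (hi.trans (Nat.le_succ m)))
      show C.Homotopic ((walkFrom U C hadj d hd m).append
        (stepWalk U C hadj (d m) (d (m+1)) (hd m))) _
      refine .trans (hom_append_right C IH _) ?_
      exact .symm (triangleMove U C hadj hface (hy 0 (Nat.zero_le _)) (hy (m+1) le_rfl)
        (hy m (Nat.le_succ m)))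

include hface in
/-- the ladder lemma: moving a chain across a strip of squares -/
lemma ladder (d e : ℕ → ι)
    (hd : ∀ i, (U (d i) ∩ U (d (i+1))).Nonempty) (he : ∀ i, (U (e i) ∩ U (e (i+1))).Nonempty)
    (z : ℕ → Y) (hzd : ∀ i, z i ∈ U (d i)) (hzd' : ∀ i, z i ∈ U (d (i+1)))
    (hze : ∀ i, z i ∈ U (e i)) (hze' : ∀ i, z i ∈ U (e (i+1)))
    (r : ∀ i : ℕ, (U (d i) ∩ U (e i)).Nonempty) :
    ∀ k, C.Homotopic
      ((walkFrom U C hadj d hd k).append (stepWalk U C hadj (d k) (e k) (r k)))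
      ((stepWalk U C hadj (d 0) (e 0) (r 0)).append (walkFrom U C hadj e he k))
  | 0 => by
      simp only [walkFrom, Walk.nil_append, Walk.append_nil]
      exact .refl _
  | (k+1) => by
      show C.Homotopic
        (((walkFrom U C hadj d hd k).append (stepWalk U C hadj (d k) (d (k+1)) (hd k))).append
          (stepWalk U C hadj (d (k+1)) (e (k+1)) (r (k+1)))) _
      rw [← Walk.append_assoc]
      have t1 : C.Homotopic
          ((stepWalk U C hadj (d k) (d (k+1)) (hd k)).append
            (stepWalk U C hadj (d (k+1)) (e (k+1)) (r (k+1))))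
          ((stepWalk U C hadj (d k) (e k) (r k)).append
            (stepWalk U C hadj (e k) (e (k+1)) (he k))) := by
        refine .trans (.symm (triangleMove U C hadj hface (hzd k) (hze' k) (hzd' k))) ?_
        exact triangleMove U C hadj hface (hzd k) (hze' k) (hze k)
      refine .trans (hom_append_left C _ t1) ?_
      rw [Walk.append_assoc]
      refine .trans (hom_append_right C
        (ladder d e hd he z hzd hzd' hze hze' r k) _) ?_
      rw [← Walk.append_assoc]
      exact .refl _

include hface in
/-- two rows with a ladder of common points between them give homotopic loops -/
lemma rows (v : ι) (d e : ℕ → ι)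
    (hd : ∀ i, (U (d i) ∩ U (d (i+1))).Nonempty) (he : ∀ i, (U (e i) ∩ U (e (i+1))).Nonempty)
    (z : ℕ → Y) (hzd : ∀ i, z i ∈ U (d i)) (hzd' : ∀ i, z i ∈ U (d (i+1)))
    (hze : ∀ i, z i ∈ U (e i)) (hze' : ∀ i, z i ∈ U (e (i+1)))
    (r : ∀ i : ℕ, (U (d i) ∩ U (e i)).Nonempty)
    (k : ℕ) (y0 y1 : Y) (hy0v : y0 ∈ U v) (hy0d : y0 ∈ U (d 0)) (hy0e : y0 ∈ U (e 0))
    (hy1v : y1 ∈ U v) (hy1d : y1 ∈ U (d k)) (hy1e : y1 ∈ U (e k)) :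
    C.Homotopic
      ((stepWalk U C hadj v (d 0) (Set.nonempty_of_mem (Set.mem_inter hy0v hy0d))).append
        ((walkFrom U C hadj d hd k).append (stepWalk U C hadj (d k) v (Set.nonempty_of_mem (Set.mem_inter hy1d hy1v)))))
      ((stepWalk U C hadj v (e 0) (Set.nonempty_of_mem (Set.mem_inter hy0v hy0e))).append
        ((walkFrom U C hadj e he k).append (stepWalk U C hadj (e k) v (Set.nonempty_of_mem (Set.mem_inter hy1e hy1v))))) := by
  have s1 : C.Homotopic (stepWalk U C hadj (d k) v (Set.nonempty_of_mem (Set.mem_inter hy1d hy1v)))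
      ((stepWalk U C hadj (d k) (e k) (Set.nonempty_of_mem (Set.mem_inter hy1d hy1e))).append
        (stepWalk U C hadj (e k) v (Set.nonempty_of_mem (Set.mem_inter hy1e hy1v)))) :=
    triangleMove U C hadj hface hy1d hy1v hy1e
  refine .trans (hom_append_left C _ (hom_append_left C _ s1)) ?_
  have s2 := ladder U C hadj hface d e hd he z hzd hzd' hze hze'
    (fun i => Set.nonempty_of_mem (Set.mem_inter (hzd i) (hze i))) k
  rw [Walk.append_assoc (walkFrom U C hadj d hd k) _ _]
  refine .trans (hom_append_left C _ (hom_append_right C s2 _)) ?_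
  rw [← Walk.append_assoc (stepWalk U C hadj (d 0) (e 0) _) _ _]
  rw [Walk.append_assoc]
  refine .trans (hom_append_right C
    (.symm (triangleMove U C hadj hface hy0v hy0e hy0d)) _) ?_
  exact .refl _

variable (hadj' : ∀ a b : ι, C.graph.Adj a b → (U a ∩ U b).Nonempty)

/-- the `m`-th vertex along a walk (constantly the endpoint past the end) -/
def seq {a b : ι} (q : C.graph.Walk a b) (m : ℕ) : ι := q.support.getD m b

lemma seq_zero {a b : ι} (q : C.graph.Walk a b) : seq C q 0 = a := by
  cases q <;> rfl

lemma seq_nil {a : ι} (m : ℕ) : seq C (Walk.nil : C.graph.Walk a a) m = a := by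
  cases m <;> rfl

lemma seq_cons_succ {a c b : ι} (h : C.graph.Adj a c) (q : C.graph.Walk c b) (m : ℕ) :
    seq C (Walk.cons h q) (m + 1) = seq C q m := by
  rfl

lemma seq_of_ge {a b : ι} (q : C.graph.Walk a b) : ∀ m, q.length ≤ m → seq C q m = b := by
  induction q with
  | nil =>
      intro m _
      exact seq_nil C m
  | cons h q ih =>
      intro m hm
      match m, hm with
      | (m+1), hm =>
          rw [seq_cons_succ]
          exact ih m (by simpa using hm)

include hadj' in
lemma seq_nonempty {a b : ι} (q : C.graph.Walk a b) (hUa : (U a).Nonempty) :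
    ∀ m, (U (seq C q m)).Nonempty := by
  induction q with
  | nil => intro m; rw [seq_nil]; exact hUa
  | cons h q ih =>
      intro m
      cases m with
      | zero => rw [seq_zero]; exact hUa
      | succ m =>
          rw [seq_cons_succ]
          obtain ⟨y, _, hy2⟩ := hadj' _ _ h
          exact ih ⟨y, hy2⟩ m

include hadj' in
lemma seq_chain {a b : ι} (q : C.graph.Walk a b) (hUa : (U a).Nonempty) :
    ∀ m, (U (seq C q m) ∩ U (seq C q (m+1))).Nonempty := by
  induction q with
  | nil =>
      intro m
      simp only [seq_nil]
      exact ⟨hUa.some, hUa.some_mem, hUa.some_mem⟩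
  | cons h q ih =>
      intro m
      cases m with
      | zero =>
          rw [seq_zero, seq_cons_succ, seq_zero]
          exact hadj' _ _ h
      | succ m =>
          rw [seq_cons_succ, seq_cons_succ]
          obtain ⟨y, _, hy2⟩ := hadj' _ _ h
          exact ih ⟨y, hy2⟩ m

include hadj' in
lemma eChain {a b : ι} (q : C.graph.Walk a b) (hUa : (U a).Nonempty) {M : ℕ} (hM : 0 < M) :
    ∀ i, (U (seq C q (i / M)) ∩ U (seq C q ((i+1) / M))).Nonempty := by
  intro i
  rcases Nat.lt_or_ge ((i+1) / M) (i / M + 1) with hlt | hge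
  · have : (i+1) / M = i / M := le_antisymm (by omega) (Nat.div_le_div_right (by omega))
    rw [this]
    obtain ⟨y, hy⟩ := seq_nonempty U C hadj' q hUa (i / M)
    exact ⟨y, hy, hy⟩
  · have : (i+1) / M = i / M + 1 := by
      have h2 : (i+1) / M ≤ i / M + 1 := by
        have := Nat.div_le_div_right (c := M) (show i + 1 ≤ i + M by omega)
        rwa [Nat.add_div_right _ hM] at this
      omega
    rw [this]
    exact seq_chain U C hadj' q hUa (i / M)

lemma walkFrom_shiftK (d : ℕ → ι) (hd : ∀ i, (U (d i) ∩ U (d (i+1))).Nonempty)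
    {K K' : ℕ} (hKK : K = K') {x y : ι} (h1 : d 0 = x) (h2 : d K = y)
    (h1' : d 0 = x) (h2' : d K' = y) :
    (walkFrom U C hadj d hd K).copy h1 h2 = (walkFrom U C hadj d hd K').copy h1' h2' := by
  subst hKK; rfl

lemma stepWalk_copy_gen {a b a' b' : ι} (h : (U a ∩ U b).Nonempty) (h1 : a = a') (h2 : b = b')
    (h' : (U a' ∩ U b').Nonempty) :
    (stepWalk U C hadj a b h).copy h1 h2 = stepWalk U C hadj a' b' h' := by
  subst h1; subst h2; rfl

include hface hadj' in
/-- a walk is homotopic to the chain walk obtained by repeating each vertex `M` times -/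
lemma rep (M : ℕ) (hM : 0 < M) : ∀ {a b : ι} (q : C.graph.Walk a b), (U a).Nonempty →
    ∀ (he : ∀ i, (U (seq C q (i / M)) ∩ U (seq C q ((i+1) / M))).Nonempty)
    (K : ℕ), K = q.length * M + (M - 1) →
    ∀ (h1 : seq C q (0 / M) = a) (h2 : seq C q (K / M) = b),
    C.Homotopic ((walkFrom U C hadj (fun i => seq C q (i / M)) he K).copy h1 h2) q
  | a, _, Walk.nil, hUa, he, K, hK, h1, h2 => by
      have hmem : ∀ i, i ≤ K → hUa.some ∈ U (seq C (Walk.nil (u := a)) (i / M)) := by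
        intro i _
        rw [seq_nil]
        exact hUa.some_mem
      refine .trans (hom_copy C (walkFrom_collapse U C hadj hface _ he hUa.some K hmem) h1 h2) ?_
      rw [stepWalk_copy U C hadj _ h1 h2 ⟨hUa.some, hUa.some_mem, hUa.some_mem⟩]
      exact .refl _
  | a, b, @SimpleGraph.Walk.cons _ _ _ c _ h q, hUa, he, K, hK, h1, h2 => by
      have hc : (U a ∩ U c).Nonempty := hadj' _ _ h
      have hUc : (U c).Nonempty := ⟨hc.some, hc.some_mem.2⟩
      have hK' : K = M + (q.length * M + (M - 1)) := by
        rw [hK, Walk.length_cons, Nat.succ_mul]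
        omega
      have hM1 : M / M = 1 := Nat.div_self hM
      have heM : seq C (Walk.cons h q) (M / M) = c := by
        rw [hM1, show (1:ℕ) = 0 + 1 from rfl, seq_cons_succ, seq_zero]
      have h2' : seq C (Walk.cons h q) ((M + (q.length * M + (M - 1))) / M) = b := by
        rw [← hK']; exact h2
      have hq1 : seq C q (0 / M) = c := by rw [Nat.zero_div, seq_zero]
      have hq2 : seq C q ((q.length * M + (M - 1)) / M) = b := by
        refine seq_of_ge C q _ ?_
        have h3 : (q.length * M) / M ≤ (q.length * M + (M - 1)) / M :=
          Nat.div_le_div_right (Nat.le_add_right _ _)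
        rwa [Nat.mul_div_cancel _ hM] at h3
      have he' := eChain U C hadj' q hUc hM
      rw [walkFrom_shiftK U C hadj _ he hK' h1 h2 h1 h2']
      rw [walkFrom_add U C hadj _ he M (q.length * M + (M - 1))]
      rw [← Walk.append_copy_copy _ _ h1 heM h2']
      have part1 : C.Homotopic
          ((walkFrom U C hadj (fun i => seq C (Walk.cons h q) (i / M)) he M).copy h1 heM)
          (Walk.cons h Walk.nil) := by
        have hmem : ∀ i, i ≤ M → hc.some ∈ U (seq C (Walk.cons h q) (i / M)) := by
          intro i hi
          have hdiv : i / M ≤ 1 := by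
            have := Nat.div_le_div_right (c := M) hi
            rwa [hM1] at this
          interval_cases hdm : (i / M)
          · rw [seq_zero]; exact hc.some_mem.1
          · rw [show (1:ℕ) = 0 + 1 from rfl, seq_cons_succ, seq_zero]
            exact hc.some_mem.2
        refine .trans (hom_copy C
          (walkFrom_collapse U C hadj hface _ he hc.some M hmem) h1 heM) ?_
        rw [stepWalk_copy_gen U C hadj _ h1 heM hc]
        have hne : a ≠ c := C.graph.ne_of_adj h
        have : stepWalk U C hadj a c hc = Walk.cons h Walk.nil := by
          simp only [stepWalk]
          rw [dif_neg hne]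
        rw [this]
        exact .refl _
      have part2 : C.Homotopic
          ((walkFrom U C hadj (fun i => (fun j => seq C (Walk.cons h q) (j / M)) (M + i))
            (fun i => he (M + i)) (q.length * M + (M - 1))).copy heM h2') q := by
        have hpoint : ∀ i, seq C (Walk.cons h q) ((M + i) / M) = seq C q (i / M) := by
          intro i
          rw [add_comm M i, Nat.add_div_right _ hM, seq_cons_succ]
        rw [walkFrom_congr U C hadj _ _ hpoint _ he' _ heM h2' hq1 hq2]
        exact rep M hM q hUc he' _ rfl hq1 hq2
      exact .trans (hom_append_right C part1 _) (hom_append_left C _ part2)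

lemma step_extend {a' b' x y : ι} (p : C.graph.Walk a' b') (h1 : a' = x) (h2 : b' = y)
    (hx : (U x ∩ U a').Nonempty) (hy : (U b' ∩ U y).Nonempty) :
    (stepWalk U C hadj x a' hx).append (p.append (stepWalk U C hadj b' y hy)) =
      p.copy h1 h2 := by
  subst h1; subst h2
  simp only [stepWalk_self, Walk.nil_append, Walk.append_nil, Walk.copy_rfl_rfl]

include hface in
lemma loop_collapse (v : ι) (d : ℕ → ι) (hd : ∀ i, (U (d i) ∩ U (d (i+1))).Nonempty)
    (k : ℕ) (y : Y) (hyv : y ∈ U v) (hyd : ∀ i, i ≤ k → y ∈ U (d i))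
    (h0 : (U v ∩ U (d 0)).Nonempty) (h1 : (U (d k) ∩ U v).Nonempty) :
    C.Homotopic ((stepWalk U C hadj v (d 0) h0).append
      ((walkFrom U C hadj d hd k).append (stepWalk U C hadj (d k) v h1))) Walk.nil := by
  have c1 := walkFrom_collapse U C hadj hface d hd y k hyd
  refine .trans (hom_append_left C _ (hom_append_right C c1 _)) ?_
  have t1 := triangleMove U C hadj hface (hyd 0 (Nat.zero_le _)) hyv (hyd k le_rfl)
  refine .trans (hom_append_left C _ (.symm t1)) ?_
  have t2 := triangleMove U C hadj hface hyv hyv (hyd 0 (Nat.zero_le _))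
  refine .trans (.symm t2) ?_
  rw [stepWalk_self]
  exact .refl _

end NerveAux

end NerveAux


section Geometry

variable {X : Type*} [MetricSpace X]

lemma exists_path_in_ball (hX : IsLengthSpace X) (p₀ : X) (r : ℝ) (x y : X)
    (hx : x ∈ Metric.ball p₀ r) (hy : y ∈ Metric.ball p₀ r) :
    ∃ σ : Path x y, ∀ t, σ t ∈ Metric.ball p₀ r := by
  have hr : 0 < r := lt_of_le_of_lt dist_nonneg (Metric.mem_ball.mp hx)
  have half : ∀ w : X, w ∈ Metric.ball p₀ r →
      ∃ σ : Path w p₀, ∀ t, σ t ∈ Metric.ball p₀ r := by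
    intro w hw
    have hd : edist w p₀ < ENNReal.ofReal r := by
      rw [edist_dist]
      exact (ENNReal.ofReal_lt_ofReal_iff hr).mpr (Metric.mem_ball.mp hw)
    rw [hX w p₀] at hd
    obtain ⟨γ, hγ⟩ := iInf_lt_iff.mp hd
    obtain ⟨⟨hcont, hγ0, hγ1⟩, hvar⟩ := iInf_lt_iff.mp hγ
    have hmem : ∀ t : ℝ, t ∈ Icc (0:ℝ) 1 → γ t ∈ Metric.ball p₀ r := by
      intro t ht
      have h1 : edist (γ t) (γ 1) ≤ eVariationOn γ (Icc 0 1) :=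
        eVariationOn.edist_le γ ht (right_mem_Icc.mpr zero_le_one)
      rw [hγ1] at h1
      have := lt_of_le_of_lt h1 hvar
      rw [Metric.mem_ball, ← (ENNReal.ofReal_lt_ofReal_iff hr), ← edist_dist]
      exact this
    refine ⟨⟨⟨fun t : unitInterval => γ t.1, ?_⟩, by simpa using hγ0, by simpa using hγ1⟩, ?_⟩
    · exact hcont.restrict
    · intro t
      exact hmem t.1 t.2
  obtain ⟨σ1, h1⟩ := half x hx
  obtain ⟨σ2, h2⟩ := half y hy
  refine ⟨σ1.trans σ2.symm, ?_⟩
  intro t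
  rw [Path.trans_apply]
  split_ifs
  · exact h1 _
  · exact h2 _

lemma cont_glue {f : ℝ → X} {a b c : ℝ}
    (h1 : ContinuousOn f (Icc a b)) (h2 : ContinuousOn f (Icc b c)) :
    ContinuousOn f (Icc a c) := by
  rcases le_total b a with hba | hab
  · exact h2.mono (Icc_subset_Icc hba le_rfl)
  rcases le_total c b with hcb | hbc
  · exact h1.mono (Icc_subset_Icc le_rfl hcb)
  have hsub : Icc a c ⊆ Icc a b ∪ Icc b c := by
    intro x hx
    rcases le_total x b with h | h
    · exact Or.inl ⟨hx.1, h⟩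
    · exact Or.inr ⟨h, hx.2⟩
  refine ContinuousOn.mono ?_ hsub
  intro x hx
  have cwa : ∀ (s t : Set ℝ), IsClosed t → ContinuousOn f s → x ∈ s ∪ t →
      ContinuousWithinAt f s x ∨ x ∉ closure s → True := fun _ _ _ _ _ _ => trivial
  refine ContinuousWithinAt.union ?_ ?_
  · by_cases hxs : x ∈ Icc a b
    · exact h1 x hxs
    · refine continuousWithinAt_of_notMem_closure ?_
      rwa [isClosed_Icc.closure_eq]
  · by_cases hxs : x ∈ Icc b c
    · exact h2 x hxs
    · refine continuousWithinAt_of_notMem_closure ?_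
      rwa [isClosed_Icc.closure_eq]

/-- gluing `k+1` paths into one function on `[0,1]`, with uniform breakpoints -/
lemma exists_glued_loop (k : ℕ) (z : ℕ → X) (S : ℕ → Set X)
    (σ : ∀ m, Path (z m) (z (m+1))) (hσ : ∀ m t, σ m t ∈ S m) :
    ∃ γ : ℝ → X, ContinuousOn γ (Icc 0 1) ∧ γ 0 = z 0 ∧ γ 1 = z (k+1) ∧
      ∀ m : ℕ, m ≤ k → ∀ t : ℝ, (m:ℝ) ≤ t * (k+1) → t * (k+1) ≤ m+1 → γ t ∈ S m := by
  classical
  set γ : ℝ → X := fun t =>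
    σ (min ⌊t * ((k:ℝ)+1)⌋₊ k)
      (Set.projIcc 0 1 zero_le_one (t * ((k:ℝ)+1) - (min ⌊t * ((k:ℝ)+1)⌋₊ k : ℕ))) with hγdef
  have hval : ∀ (m : ℕ), m ≤ k → ∀ (t : ℝ), (m:ℝ) ≤ t * ((k:ℝ)+1) → t * ((k:ℝ)+1) ≤ m+1 →
      γ t = σ m (Set.projIcc 0 1 zero_le_one (t * ((k:ℝ)+1) - m)) := by
    intro m hm t h1 h2
    have hx0 : (0:ℝ) ≤ t * ((k:ℝ)+1) := le_trans (by positivity) h1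
    have hf1 : m ≤ ⌊t * ((k:ℝ)+1)⌋₊ := Nat.le_floor h1
    have hf2 : ⌊t * ((k:ℝ)+1)⌋₊ ≤ m + 1 := by
      have := Nat.floor_le_floor h2
      rwa [show ((m:ℝ)+1) = ((m+1 : ℕ) : ℝ) by push_cast; ring, Nat.floor_natCast] at this
    have hfloor : ⌊t * ((k:ℝ)+1)⌋₊ ≤ t * ((k:ℝ)+1) := Nat.floor_le hx0
    simp only [hγdef]
    generalize hJ : ⌊t * ((k:ℝ)+1)⌋₊ ⊓ k = j
    have hjm : m ≤ j := by rw [← hJ]; exact le_min hf1 hm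
    have hjm2 : j ≤ m + 1 := by rw [← hJ]; exact le_trans (min_le_left _ _) hf2
    rcases eq_or_lt_of_le hjm with hj | hj
    · rw [← hj]
    · have hj1 : j = m + 1 := le_antisymm hjm2 hj
      subst hj1
      have hfk : m + 1 ≤ ⌊t * ((k:ℝ)+1)⌋₊ := by
        rw [← hJ] at hj; exact lt_of_lt_of_le hj (min_le_left _ _)
      have hxge : ((m:ℝ)+1) ≤ t * ((k:ℝ)+1) := by
        calc ((m:ℝ)+1) = ((m+1 : ℕ):ℝ) := by push_cast; ring
        _ ≤ (⌊t * ((k:ℝ)+1)⌋₊ : ℝ) := by exact_mod_cast hfk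
        _ ≤ t * ((k:ℝ)+1) := hfloor
      have hxeq : t * ((k:ℝ)+1) = (m:ℝ)+1 := le_antisymm h2 hxge
      rw [hxeq]
      have e1 : ((m:ℝ)+1) - ((m+1 : ℕ) : ℝ) = 0 := by push_cast; ring
      have e2 : ((m:ℝ)+1) - (m:ℝ) = 1 := by ring
      rw [e1, e2, Set.projIcc_left, Set.projIcc_right]
      exact ((σ (m+1)).source).trans ((σ m).target).symm
  have hpos : (0:ℝ) < (k:ℝ) + 1 := by positivity
  refine ⟨γ, ?_, ?_, ?_, ?_⟩
  · -- continuity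
    have piece : ∀ m : ℕ, m ≤ k →
        ContinuousOn γ (Icc ((m:ℝ)/((k:ℝ)+1)) (((m:ℝ)+1)/((k:ℝ)+1))) := by
      intro m hm
      have gcont : Continuous fun t : ℝ =>
          σ m (Set.projIcc 0 1 zero_le_one (t * ((k:ℝ)+1) - m)) :=
        (σ m).continuous.comp (continuous_projIcc.comp (by continuity))
      refine ContinuousOn.congr gcont.continuousOn ?_
      intro t ht
      have h1 : (m:ℝ) ≤ t * ((k:ℝ)+1) := by
        have := (div_le_iff₀ hpos).mp ht.1
        linarith
      have h2 : t * ((k:ℝ)+1) ≤ (m:ℝ)+1 := by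
        have := (le_div_iff₀ hpos).mp ht.2
        linarith
      exact hval m hm t h1 h2
    have main : ∀ m : ℕ, m ≤ k → ContinuousOn γ (Icc 0 (((m:ℝ)+1)/((k:ℝ)+1))) := by
      intro m
      induction m with
      | zero =>
          intro _
          have := piece 0 (Nat.zero_le _)
          simpa using this
      | succ m ih =>
          intro hm
          have h1 := ih (le_trans (Nat.le_succ m) hm)
          have h2 := piece (m+1) hm
          push_cast at h2 ⊢
          exact cont_glue h1 (by convert h2 using 2 <;> push_cast <;> ring)
    have := main k le_rfl
    rwa [div_self (ne_of_gt hpos)] at this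
  · -- γ 0 = z 0
    have := hval 0 (Nat.zero_le _) 0 (by norm_num) (by norm_num)
    rw [this]
    have e : (0:ℝ) * ((k:ℝ)+1) - (0:ℕ) = 0 := by norm_num
    rw [e, Set.projIcc_left]
    exact (σ 0).source
  · -- γ 1 = z (k+1)
    have := hval k le_rfl 1 (by rw [one_mul]; linarith) (by rw [one_mul])
    rw [this]
    have e : (1:ℝ) * ((k:ℝ)+1) - (k:ℕ) = 1 := by push_cast; ring
    rw [e, Set.projIcc_right]
    exact (σ k).target
  · intro m hm t h1 h2
    rw [hval m hm t h1 h2]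
    exact hσ m _

end Geometry


open NerveAux

/-- If a simply connected length space is covered by `n` metric balls admitting a
subordinate partition of unity (with `ψ i` nonzero exactly on `U i`), then the nerve
of the cover (as a 2-complex) is simply connected. -/
theorem nerve_simplyConnected {Xt : Type*} [MetricSpace Xt] [SimplyConnectedSpace Xt]
    (hXt : IsLengthSpace Xt) (n : ℕ) (pt : Fin n → Xt) (r : ℝ) (hr : 0 < r)
    (U : Fin n → Set Xt) (hU : ∀ i, U i = Metric.ball (pt i) r)
    (hcov : ⋃ i, U i = univ)
    (ψ : Fin n → Xt → ℝ) (hcont : ∀ i, Continuous (ψ i))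
    (hnonneg : ∀ i x, 0 ≤ ψ i x) (hsum : ∀ x, ∑ i, ψ i x = 1)
    (hsupp : ∀ i x, ψ i x ≠ 0 ↔ x ∈ U i) :
    ∀ C : TwoComplex (Fin n), C.graph = nerveGraph U →
      C.faces = {f : Finset (Fin n) | f.card = 3 ∧ (⋂ i ∈ f, U i).Nonempty} →
      C.SimplyConnected := by
  classical
  intro C hG hF v p
  -- translate the hypotheses on C
  have hadj : ∀ a b : Fin n, a ≠ b → (U a ∩ U b).Nonempty → C.graph.Adj a b := by
    rw [hG]; exact fun a b h1 h2 => show a ≠ b ∧ (U a ∩ U b).Nonempty from ⟨h1, h2⟩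
  have hadj' : ∀ a b : Fin n, C.graph.Adj a b → (U a ∩ U b).Nonempty := by
    rw [hG]; exact fun a b hab => (show a ≠ b ∧ (U a ∩ U b).Nonempty from hab).2
  have hface : ∀ a b c : Fin n, a ≠ b → a ≠ c → c ≠ b →
      ∀ y : Xt, y ∈ U a → y ∈ U b → y ∈ U c → ({a, b, c} : Finset (Fin n)) ∈ C.faces := by
    rw [hF]
    intro a b c hab hac hcb y ya yb yc
    constructor
    · rw [Finset.card_insert_of_notMem (by simp [hab, hac]),
        Finset.card_insert_of_notMem
          (by simp only [Finset.mem_singleton]; exact fun h => hcb h.symm),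
        Finset.card_singleton]
    · refine ⟨y, ?_⟩
      simp only [Set.mem_iInter]
      intro i hi
      simp only [Finset.mem_insert, Finset.mem_singleton] at hi
      rcases hi with h | h | h <;> subst h <;> assumption
  -- basic setup
  have hUne : ∀ i, (U i).Nonempty := fun i => by
    rw [hU i]; exact ⟨pt i, Metric.mem_ball_self hr⟩
  set k := p.length with hkdef
  have hUv : (U v).Nonempty := hUne v
  set x₀ := hUv.some with hx₀def
  have hx₀ : x₀ ∈ U v := hUv.some_mem
  -- vertex sequence of the walk
  have hsq0 : seq C p 0 = v := seq_zero C p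
  have hsqge : ∀ m, k ≤ m → seq C p m = v := fun m hm => seq_of_ge C p m hm
  have wit : ∀ m, (U (seq C p m) ∩ U (seq C p (m+1))).Nonempty :=
    fun m => seq_chain U C hadj' p hUv m
  -- nodes of the geometric loop
  set z : ℕ → Xt := fun m => if m = 0 ∨ k < m then x₀ else (wit (m-1)).some with hzdef
  have hz1 : ∀ m, z m ∈ U (seq C p m) := by
    intro m
    simp only [hzdef]
    by_cases h : m = 0 ∨ k < m
    · rw [if_pos h]
      rcases h with h | h
      · subst h; rw [hsq0]; exact hx₀
      · rw [hsqge m h.le]; exact hx₀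
    · rw [if_neg h]
      push_neg at h
      obtain ⟨m', rfl⟩ : ∃ m', m = m' + 1 := ⟨m - 1, by omega⟩
      exact (wit m').some_mem.2
  have hz2 : ∀ m, z (m+1) ∈ U (seq C p m) := by
    intro m
    simp only [hzdef]
    by_cases h : m + 1 = 0 ∨ k < m + 1
    · rw [if_pos h]
      have hk : k ≤ m := by omega
      rw [hsqge m hk]; exact hx₀
    · rw [if_neg h]
      have : m + 1 - 1 = m := rfl
      rw [this]
      exact (wit m).some_mem.1
  -- geometric segments
  have hσm : ∀ m, ∃ σ : Path (z m) (z (m+1)), ∀ t, σ t ∈ U (seq C p m) := by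
    intro m
    have h1 := hz1 m
    have h2 := hz2 m
    rw [hU (seq C p m)] at h1 h2 ⊢
    exact exists_path_in_ball hXt (pt (seq C p m)) r _ _ h1 h2
  obtain ⟨γ, γcont, γ0, γ1, γmem⟩ := exists_glued_loop k z (fun m => U (seq C p m))
    (fun m => (hσm m).choose) (fun m t => (hσm m).choose_spec t)
  have γ0' : γ 0 = x₀ := by rw [γ0, hzdef]; simp
  have γ1' : γ 1 = x₀ := by rw [γ1, hzdef]; simp
  -- the filling homotopy
  set Γ : Path x₀ x₀ :=
    ⟨⟨fun t : unitInterval => γ t.1, γcont.restrict⟩, by simpa using γ0', by simpa using γ1'⟩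
    with hΓdef
  obtain ⟨F⟩ := SimplyConnectedSpace.paths_homotopic Γ (Path.refl x₀)
  have F0 : ∀ t : unitInterval, F (0, t) = γ t.1 := fun t => F.apply_zero t
  have F1 : ∀ t : unitInterval, F (1, t) = x₀ := fun t => F.apply_one t
  have Fs0 : ∀ s : unitInterval, F (s, 0) = x₀ := fun s => F.source s
  have Fs1 : ∀ s : unitInterval, F (s, 1) = x₀ := fun s => F.target s
  -- Lebesgue number
  have hUopen : ∀ i, IsOpen (U i) := fun i => by rw [hU i]; exact Metric.isOpen_ball
  obtain ⟨δ, hδpos, hδ⟩ := lebesgue_number_lemma_of_metric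
    (isCompact_univ : IsCompact (univ : Set (unitInterval × unitInterval)))
    (fun i => (map_continuous F.toContinuousMap).isOpen_preimage _ (hUopen i))
    (by intro st _
        have : F st ∈ ⋃ i, U i := by rw [hcov]; trivial
        simpa using this)
  -- grid parameters
  set M : ℕ := ⌈1/δ⌉₊ + 1 with hMdef
  have hM : 0 < M := Nat.succ_pos _
  set N : ℕ := (k+1) * M with hNdef
  have hN1 : 1 ≤ N := Nat.one_le_iff_ne_zero.mpr (by positivity)
  set L : ℕ := N - 1 with hLdef
  have hLN : L + 1 = N := by omega
  have hNδ : (1:ℝ)/N < δ := by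
    have h1 : (M:ℝ) ≤ N := by
      have : M ≤ N := Nat.le_mul_of_pos_left M (Nat.succ_pos k)
      exact_mod_cast this
    have h2 : 1/δ < (M:ℝ) := by
      rw [hMdef]
      push_cast
      exact lt_of_le_of_lt (Nat.le_ceil _) (by linarith)
    have hM0 : (0:ℝ) < M := by exact_mod_cast hM
    have hN0 : (0:ℝ) < N := by linarith
    rw [div_lt_iff₀ hN0]
    rw [div_lt_iff₀ hδpos] at h2
    nlinarith
  set toI : ℝ → unitInterval := Set.projIcc 0 1 zero_le_one with htoIdef
  have hN0 : (0:ℝ) < N := by exact_mod_cast hN1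
  have hcoe : ∀ x : ℝ, 0 ≤ x → x ≤ 1 → ((toI x : ℝ)) = x := by
    intro x h0 h1
    simp only [htoIdef]
    rw [Set.projIcc_of_mem zero_le_one ⟨h0, h1⟩]
  have hcoe' : ∀ m : ℕ, m ≤ N → ((toI ((m:ℝ)/N) : ℝ)) = (m:ℝ)/N := by
    intro m hm
    refine hcoe _ (by positivity) ?_
    rw [div_le_one hN0]
    exact_mod_cast hm
  -- choosing indices for the squares of the grid
  have hsqr : ∀ i j : ℕ, ∃ c : Fin n, ∀ st : unitInterval × unitInterval,
      ((st.2 : ℝ) ∈ Icc (((min i L : ℕ):ℝ)/N) ((((min i L : ℕ):ℝ) + 1)/N)) →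
      ((st.1 : ℝ) ∈ Icc (((min j L : ℕ):ℝ)/N) ((((min j L : ℕ):ℝ) + 1)/N)) →
      F st ∈ U c := by
    intro i j
    obtain ⟨c, hc⟩ := hδ (toI (((min j L : ℕ):ℝ)/N), toI (((min i L : ℕ):ℝ)/N)) trivial
    refine ⟨c, ?_⟩
    intro st h2 h1
    refine hc ?_
    rw [Metric.mem_ball, Prod.dist_eq]
    have hiL : (min i L : ℕ) ≤ N := by omega
    have hjL : (min j L : ℕ) ≤ N := by omega
    have key : ∀ (x : unitInterval) (m : ℕ), m ≤ N →
        (x:ℝ) ∈ Icc (((m:ℕ):ℝ)/N) ((((m:ℕ):ℝ) + 1)/N) →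
        dist x (toI (((m:ℕ):ℝ)/N)) < δ := by
      intro x m hm hx
      rw [Subtype.dist_eq, hcoe' m hm, Real.dist_eq]
      rw [abs_sub_lt_iff]
      constructor
      · have := hx.2
        have h3 : ((m:ℝ)+1)/N - (m:ℝ)/N = 1/N := by ring
        nlinarith [hNδ]
      · have := hx.1
        nlinarith [hNδ, hδpos]
    exact max_lt (key st.1 _ hjL h1) (key st.2 _ hiL h2)
  set cg : ℕ → ℕ → Fin n := fun i j => (hsqr i j).choose with hcgdef
  have cgmem : ∀ i j : ℕ, ∀ st : unitInterval × unitInterval,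
      ((st.2 : ℝ) ∈ Icc (((min i L : ℕ):ℝ)/N) ((((min i L : ℕ):ℝ) + 1)/N)) →
      ((st.1 : ℝ) ∈ Icc (((min j L : ℕ):ℝ)/N) ((((min j L : ℕ):ℝ) + 1)/N)) →
      F st ∈ U (cg i j) := fun i j => (hsqr i j).choose_spec
  -- corner membership helper
  have mem1 : ∀ i j a b : ℕ, min i L ≤ a → a ≤ min i L + 1 → min j L ≤ b → b ≤ min j L + 1 →
      F (toI ((b:ℝ)/N), toI ((a:ℝ)/N)) ∈ U (cg i j) := by
    intro i j a b hai ha hbj hb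
    have hkey : ∀ m c : ℕ, min m L ≤ c → c ≤ min m L + 1 →
        ((toI ((c:ℝ)/N)) : ℝ) ∈ Icc (((min m L : ℕ):ℝ)/N) ((((min m L : ℕ):ℝ) + 1)/N) := by
      intro m c h1 h2
      have hcN : c ≤ N := by omega
      rw [hcoe' c hcN]
      refine ⟨(div_le_div_iff_of_pos_right hN0).mpr ?_, (div_le_div_iff_of_pos_right hN0).mpr ?_⟩
      · exact_mod_cast h1
      · push_cast
        have : (c:ℝ) ≤ (min m L : ℕ) + 1 := by exact_mod_cast h2
        push_cast at this
        linarith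
    exact cgmem i j _ (hkey i a hai ha) (hkey j b hbj hb)
  have toI0 : toI 0 = 0 := by
    refine Subtype.ext ?_
    rw [hcoe 0 le_rfl zero_le_one]
    simp
  have toI1 : toI 1 = 1 := by
    refine Subtype.ext ?_
    rw [hcoe 1 zero_le_one le_rfl]
    simp
  -- corner memberships
  have corn : ∀ i j : ℕ,
      F (toI (((min (j+1) L : ℕ):ℝ)/N), toI (((min (i+1) L : ℕ):ℝ)/N)) ∈
        U (cg i j) ∩ U (cg (i+1) j) ∩ (U (cg i (j+1)) ∩ U (cg (i+1) (j+1))) := by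
    intro i j
    refine ⟨⟨?_, ?_⟩, ?_, ?_⟩ <;>
      exact mem1 _ _ _ _ (by omega) (by omega) (by omega) (by omega)
  have hleft : ∀ j, x₀ ∈ U (cg 0 j) := by
    intro j
    have := mem1 0 j 0 (min j L) (by omega) (by omega) (by omega) (by omega)
    rw [show ((0:ℕ):ℝ)/N = (0:ℝ) by norm_num, toI0, Fs0] at this
    exact this
  have hright : ∀ i j : ℕ, L ≤ i → x₀ ∈ U (cg i j) := by
    intro i j hi
    have := mem1 i j N (min j L) (by omega) (by omega) (by omega) (by omega)
    rw [show ((N:ℕ):ℝ)/N = (1:ℝ) from div_self (ne_of_gt hN0), toI1, Fs1] at this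
    exact this
  have htopm : ∀ i j : ℕ, L ≤ j → x₀ ∈ U (cg i j) := by
    intro i j hj
    have := mem1 i j (min i L) N (by omega) (by omega) (by omega) (by omega)
    rw [show ((N:ℕ):ℝ)/N = (1:ℝ) from div_self (ne_of_gt hN0), toI1, F1] at this
    exact this
  have hbot : ∀ i a : ℕ, min i L ≤ a → a ≤ min i L + 1 → γ ((a:ℝ)/N) ∈ U (cg i 0) := by
    intro i a h1 h2
    have := mem1 i 0 a 0 h1 h2 (by omega) (by omega)
    rw [show ((0:ℕ):ℝ)/N = (0:ℝ) by norm_num, toI0, F0, hcoe' a (by omega)] at this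
    exact this
  -- γ-values lie in the sets of the repeated walk chain
  have hM0R : (0:ℝ) < M := by exact_mod_cast hM
  have harith : ∀ a : ℕ, ((a:ℝ)/N)*((k:ℝ)+1) = (a:ℝ)/M := by
    intro a
    have hNM : (N:ℝ) = ((k:ℝ)+1) * M := by rw [hNdef]; push_cast; ring
    rw [hNM]
    field_simp
  have ebot : ∀ i a : ℕ, i < N → i ≤ a → a ≤ i + 1 → γ ((a:ℝ)/N) ∈ U (seq C p (i / M)) := by
    intro i a hiN hia hai
    have hik : i / M ≤ k := by
      have : i / M < k + 1 := Nat.div_lt_of_lt_mul (by rw [mul_comm]; omega)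
      omega
    refine γmem (i/M) hik _ ?_ ?_
    · rw [harith a, le_div_iff₀ hM0R]
      have hn : i / M * M ≤ a := le_trans (Nat.div_mul_le_self i M) hia
      exact_mod_cast hn
    · rw [harith a, div_le_iff₀ hM0R]
      have hn : a ≤ (i / M + 1) * M := by
        have h1 := Nat.div_add_mod i M
        have h2 := Nat.mod_lt i hM
        nlinarith [h1, h2]
      calc (a:ℝ) ≤ ((i / M + 1) * M : ℕ) := by exact_mod_cast hn
      _ = (((i/M : ℕ):ℝ) + 1) * M := by push_cast; ring
  have hsqN : ∀ i : ℕ, N ≤ i + 1 → seq C p ((i+1) / M) = v := by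
    intro i hi
    refine hsqge _ ?_
    rw [Nat.le_div_iff_mul_le hM]
    have : k * M ≤ (k+1) * M := Nat.mul_le_mul_right M (Nat.le_succ k)
    omega
  have hsqN' : ∀ i : ℕ, N ≤ i + 1 → seq C p (i / M) = v := by
    intro i hi
    refine hsqge _ ?_
    rw [Nat.le_div_iff_mul_le hM]
    have h1 : (k+1) * M = k * M + M := Nat.succ_mul k M
    omega
  -- row chains
  have hdrow : ∀ j i : ℕ, (U (cg i j) ∩ U (cg (i+1) j)).Nonempty :=
    fun j i => ⟨_, (corn i j).1.1, (corn i j).1.2⟩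
  have he' : ∀ i, (U (seq C p (i / M)) ∩ U (seq C p ((i+1) / M))).Nonempty :=
    eChain U C hadj' p hUv hM
  have hKeq : N - 1 = p.length * M + (M - 1) := by
    rw [hNdef, ← hkdef, Nat.succ_mul]
    omega
  have h1e : seq C p (0 / M) = v := by rw [Nat.zero_div]; exact seq_zero C p
  have h2e : seq C p ((N-1) / M) = v := by
    refine seq_of_ge C p _ ?_
    rw [Nat.le_div_iff_mul_le hM]
    have h1 : (k+1) * M = k * M + M := Nat.succ_mul k M
    omega
  have hrep := rep U C hadj hface hadj' M hM p hUv he' (N-1) hKeq h1e h2e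
  have hxeV : (U v ∩ U (seq C p (0 / M))).Nonempty := ⟨x₀, hx₀, by rw [h1e]; exact hx₀⟩
  have hyeV : (U (seq C p ((N-1) / M)) ∩ U v).Nonempty :=
    ⟨x₀, by rw [h2e]; exact hx₀, hx₀⟩
  have eLoopEq := step_extend U C hadj
    (walkFrom U C hadj (fun i => seq C p (i / M)) he' (N-1)) h1e h2e hxeV hyeV
  have hA : C.Homotopic ((stepWalk U C hadj v (seq C p (0 / M)) hxeV).append
      ((walkFrom U C hadj (fun i => seq C p (i / M)) he' (N-1)).append
        (stepWalk U C hadj (seq C p ((N-1) / M)) v hyeV))) p := by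
    rw [eLoopEq]; exact hrep
  -- ladder between the repeated walk and the bottom row of the grid
  have hz_a : ∀ i : ℕ, γ (((min (i+1) N : ℕ):ℝ)/N) ∈ U (seq C p (i / M)) := by
    intro i
    rcases Nat.lt_or_ge (i+1) N with h | h
    · rw [min_eq_left (by omega)]
      exact ebot i (i+1) (by omega) (by omega) (by omega)
    · rw [min_eq_right (by omega), show ((N:ℕ):ℝ)/N = (1:ℝ) from div_self (ne_of_gt hN0),
        γ1', hsqN' i (by omega)]
      exact hx₀
  have hz_b : ∀ i : ℕ, γ (((min (i+1) N : ℕ):ℝ)/N) ∈ U (seq C p ((i+1) / M)) := by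
    intro i
    rcases Nat.lt_or_ge (i+1) N with h | h
    · rw [min_eq_left (by omega)]
      exact ebot (i+1) (i+1) (by omega) (by omega) (by omega)
    · rw [min_eq_right (by omega), show ((N:ℕ):ℝ)/N = (1:ℝ) from div_self (ne_of_gt hN0),
        γ1', hsqN i (by omega)]
      exact hx₀
  have hz_c : ∀ i : ℕ, γ (((min (i+1) N : ℕ):ℝ)/N) ∈ U (cg i 0) :=
    fun i => hbot i (min (i+1) N) (by omega) (by omega)
  have hz_d : ∀ i : ℕ, γ (((min (i+1) N : ℕ):ℝ)/N) ∈ U (cg (i+1) 0) :=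
    fun i => hbot (i+1) (min (i+1) N) (by omega) (by omega)
  have hB := rows U C hadj hface v (fun i => seq C p (i / M)) (fun i => cg i 0)
    he' (fun i => hdrow 0 i) (fun i => γ (((min (i+1) N : ℕ):ℝ)/N))
    hz_a hz_b hz_c hz_d (fun i => ⟨_, hz_a i, hz_c i⟩) (N-1)
    x₀ x₀ hx₀ (by show x₀ ∈ U (seq C p (0 / M)); rw [h1e]; exact hx₀) (hleft 0)
    hx₀ (by show x₀ ∈ U (seq C p ((N-1) / M)); rw [h2e]; exact hx₀)
    (hright (N-1) 0 (by omega))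
  -- loops along the rows of the grid
  have rowh0 : ∀ j, (U v ∩ U (cg 0 j)).Nonempty := fun j => ⟨x₀, hx₀, hleft j⟩
  have rowh1 : ∀ j, (U (cg (N-1) j) ∩ U v).Nonempty :=
    fun j => ⟨x₀, hright (N-1) j (by omega), hx₀⟩
  set loopRow : ℕ → C.graph.Walk v v := fun j =>
    (stepWalk U C hadj v (cg 0 j) (rowh0 j)).append
      ((walkFrom U C hadj (fun i => cg i j) (fun i => hdrow j i) (N-1)).append
        (stepWalk U C hadj (cg (N-1) j) v (rowh1 j))) with hloopRow
  have hrowstep : ∀ j, C.Homotopic (loopRow j) (loopRow (j+1)) := by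
    intro j
    exact rows U C hadj hface v (fun i => cg i j) (fun i => cg i (j+1))
      (fun i => hdrow j i) (fun i => hdrow (j+1) i)
      (fun i => F (toI (((min (j+1) L : ℕ):ℝ)/N), toI (((min (i+1) L : ℕ):ℝ)/N)))
      (fun i => (corn i j).1.1) (fun i => (corn i j).1.2)
      (fun i => (corn i j).2.1) (fun i => (corn i j).2.2)
      (fun i => ⟨_, (corn i j).1.1, (corn i j).2.1⟩) (N-1)
      x₀ x₀ hx₀ (hleft j) (hleft (j+1))
      hx₀ (hright (N-1) j (by omega)) (hright (N-1) (j+1) (by omega))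
  have htop : C.Homotopic (loopRow L) Walk.nil :=
    loop_collapse U C hadj hface v (fun i => cg i L) (fun i => hdrow L i) (N-1) x₀ hx₀
      (fun i _ => htopm i L le_rfl) (rowh0 L) (rowh1 L)
  have hdown : ∀ j, C.Homotopic (loopRow (L - j)) Walk.nil := by
    intro j
    induction j with
    | zero => exact htop
    | succ j ih =>
        rcases Nat.lt_or_ge j L with hj | hj
        · have heq : L - (j+1) + 1 = L - j := by omega
          refine .trans (hrowstep (L - (j+1))) ?_
          rw [heq]
          exact ih
        · have heq : L - (j+1) = L - j := by omega
          rw [heq]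
          exact ih
  have hC : C.Homotopic (loopRow 0) Walk.nil := by
    have := hdown L
    rw [Nat.sub_self] at this
    exact this
  exact .trans (.symm hA) (.trans hB hC)
end
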